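/- arXiv:1609.07324 — 6 statements merged into one kernel-verified Lean document; each statement's English description precedes it below -/
import Mathlib

section
/- Let (x,v) : [0,∞) → (ℝ^d)^N × (ℝ^d)^N be a solution of the Cucker-Smale system ẋ_i = v_i, v̇_i = (1/N) Σ_{j=1}^N a(‖x_i − x_j‖)(v_j − v_i), where the interaction kernel a : [0,∞) → (0,∞) is nonincreasing (decreasing) and strictly positive. Suppose there exists R > 0 such that the set {t ≥ 0 : ‖x_i(t) − x_j(t)‖ ≤ R for all i,j = 1,...,N} has infinite Lebesgue measure. Then (x,v) converges to consensus, i.e. lim_{t→∞} ‖v_i(t) − v̄(t)‖ = 0 for every i = 1,...,N, where v̄(t) = (1/N) Σ_{i=1}^N v_i(t). -/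
open scoped BigOperators
open MeasureTheory Filter
open Finset

section Aux

variable {E : Type*} [NormedAddCommGroup E] [InnerProductSpace ℝ E]

lemma alg_identity {N : ℕ} (hN : 0 < N)
    (A : Fin N → Fin N → ℝ) (hA : ∀ i j, A i j = A j i) (w : Fin N → E) :
    ∑ i, ∑ j, (2:ℝ) * inner ℝ (((N:ℝ)⁻¹ • ∑ k, A i k • (w k - w i)) - ((N:ℝ)⁻¹ • ∑ k, A j k • (w k - w j))) (w i - w j)
      = -2 * ∑ i, ∑ j, A i j * ‖w i - w j‖^2 := by
  set B : Fin N → E := fun i => ∑ k, A i k • (w k - w i) with hB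
  -- sum of B is zero
  have hBsum : ∑ i, B i = 0 := by
    simp only [hB, smul_sub, sum_sub_distrib]
    rw [sum_comm (s := univ) (t := univ) (f := fun i k => A i k • w k)]
    have : ∀ j i : Fin N, A i j • w j = A j i • w j := by intro j i; rw [hA]
    simp only [this]
    simp [sub_eq_zero]
  -- T computation
  have hT : (2:ℝ) * ∑ i, (inner ℝ (B i) (w i) : ℝ) = -∑ i, ∑ k, A i k * ‖w i - w k‖^2 := by
    have h1 : ∑ i, (inner ℝ (B i) (w i) : ℝ) = ∑ i, ∑ k, A i k * inner ℝ (w k - w i) (w i) := by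
      simp [hB, sum_inner, real_inner_smul_left]
    have h2 : ∑ i, ∑ k, A i k * (inner ℝ (w k - w i) (w i) : ℝ)
        = ∑ i, ∑ k, A i k * inner ℝ (w i - w k) (w k) := by
      rw [sum_comm]
      refine sum_congr rfl fun k _ => sum_congr rfl fun i _ => ?_
      rw [hA]
    rw [h1]
    have : ∀ i k : Fin N, A i k * (inner ℝ (w k - w i) (w i) : ℝ) + A i k * inner ℝ (w i - w k) (w k)
        = -(A i k * ‖w i - w k‖^2) := by
      intro i k
      have hone : (inner ℝ (w k - w i) (w i) : ℝ) + inner ℝ (w i - w k) (w k)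
          = -‖w i - w k‖^2 := by
        have hn : ‖w i - w k‖^2 = (inner ℝ (w i - w k) (w i - w k) : ℝ) :=
          (real_inner_self_eq_norm_sq _).symm
        simp only [inner_sub_left, inner_sub_right] at hn ⊢
        have hc := real_inner_comm (w i) (w k)
        linarith
      linear_combination A i k * hone
    calc (2:ℝ) * ∑ i, ∑ k, A i k * inner ℝ (w k - w i) (w i)
        = ∑ i, ∑ k, (A i k * (inner ℝ (w k - w i) (w i):ℝ) + A i k * inner ℝ (w i - w k) (w k)) := by
          simp only [sum_add_distrib]; rw [← h2]; ring
      _ = ∑ i, ∑ k, -(A i k * ‖w i - w k‖^2) := by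
          exact sum_congr rfl fun i _ => sum_congr rfl fun k _ => this i k
      _ = -∑ i, ∑ k, A i k * ‖w i - w k‖^2 := by simp [sum_neg_distrib]
  have hNne : (N:ℝ) ≠ 0 := Nat.cast_ne_zero.mpr hN.ne'
  have e3 : ∑ i, ∑ j, (inner ℝ (B i) (w i - w j) : ℝ) = (N:ℝ) * ∑ i, inner ℝ (B i) (w i) := by
    have : ∀ i : Fin N, ∑ j, (inner ℝ (B i) (w i - w j) : ℝ)
        = (N:ℝ) * inner ℝ (B i) (w i) - inner ℝ (B i) (∑ j, w j) := by
      intro i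
      simp [inner_sub_right, sum_sub_distrib, inner_sum, mul_comm]
    simp only [this, sum_sub_distrib, ← inner_sum  ]
    rw [← sum_inner, hBsum]
    simp [mul_sum]
  have e2 : ∑ i, ∑ j, (inner ℝ (B j) (w i - w j) : ℝ) = -∑ i, ∑ j, (inner ℝ (B i) (w i - w j) : ℝ) := by
    rw [sum_comm]
    rw [← sum_neg_distrib]
    refine sum_congr rfl fun i _ => ?_
    rw [← sum_neg_distrib]
    refine sum_congr rfl fun j _ => ?_
    rw [← inner_neg_right]
    simp [neg_sub]
  have key : ∑ i, ∑ j, (inner ℝ (B i - B j) (w i - w j) : ℝ)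
      = 2 * (N:ℝ) * ∑ i, inner ℝ (B i) (w i) := by
    simp only [inner_sub_left, sum_sub_distrib, e2, e3]
    ring
  calc ∑ i, ∑ j, (2:ℝ) * inner ℝ (((N:ℝ)⁻¹ • B i) - ((N:ℝ)⁻¹ • B j)) (w i - w j)
      = ∑ i, ∑ j, (2 * (N:ℝ)⁻¹) * (inner ℝ (B i - B j) (w i - w j) : ℝ) := by
        refine sum_congr rfl fun i _ => sum_congr rfl fun j _ => ?_
        rw [← smul_sub, real_inner_smul_left]; ring
    _ = (2 * (N:ℝ)⁻¹) * ∑ i, ∑ j, (inner ℝ (B i - B j) (w i - w j) : ℝ) := by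
        simp [mul_sum]
    _ = -2 * ∑ i, ∑ j, A i j * ‖w i - w j‖^2 := by
        rw [key]
        field_simp
        linear_combination hT

lemma hasDerivAt_norm_sq' {f : ℝ → E} {f' : E} {t : ℝ} (hf : HasDerivAt f f' t) :
    HasDerivAt (fun s => ‖f s‖^2) ((2:ℝ) * inner ℝ f' (f t)) t := by
  have h := HasDerivAt.inner (𝕜 := ℝ) hf hf
  have heq : (fun s => ‖f s‖^2) = fun s => (inner ℝ (f s) (f s) : ℝ) := by
    funext s; exact (real_inner_self_eq_norm_sq _).symm
  rw [heq]
  refine h.congr_deriv ?_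
  rw [real_inner_comm]; ring

end Aux

/-- A solution of the Cucker-Smale system whose agents stay within
mutual distance `R` for an infinite amount of time converges to consensus. -/
theorem cuckerSmale_consensus_of_uniformly_bounded
    {d N : ℕ} (hN : 0 < N)
    (a : ℝ → ℝ)
    (ha_pos : ∀ r, 0 ≤ r → 0 < a r)
    (ha_mono : ∀ r s, 0 ≤ r → r ≤ s → a s ≤ a r)
    (x v : ℝ → Fin N → EuclideanSpace ℝ (Fin d))
    (hx : ∀ (i : Fin N), ∀ t, 0 ≤ t → HasDerivAt (fun s => x s i) (v t i) t)
    (hv : ∀ (i : Fin N), ∀ t, 0 ≤ t → HasDerivAt (fun s => v s i)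
      ((N : ℝ)⁻¹ • ∑ j, a ‖x t i - x t j‖ • (v t j - v t i)) t)
    (R : ℝ) (hR : 0 < R)
    (hmeas : volume {t : ℝ | 0 ≤ t ∧ ∀ i j, ‖x t i - x t j‖ ≤ R} = ⊤) :
    ∀ i, Tendsto (fun t => ‖v t i - (N : ℝ)⁻¹ • ∑ j, v t j‖) atTop (nhds 0) := by
  set F : ℝ → ℝ := fun t => ∑ i, ∑ j, ‖v t i - v t j‖^2 with hFdef
  set G : ℝ → ℝ := fun t => -2 * ∑ i, ∑ j, a ‖x t i - x t j‖ * ‖v t i - v t j‖^2 with hGdef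
  set S : Set ℝ := {t : ℝ | 0 ≤ t ∧ ∀ i j, ‖x t i - x t j‖ ≤ R} with hSdef
  -- nonnegativity of F
  have hF0 : ∀ t, 0 ≤ F t := fun t =>
    Finset.sum_nonneg fun i _ => Finset.sum_nonneg fun j _ => sq_nonneg _
  -- derivative of F
  have hFderiv : ∀ t, 0 ≤ t → HasDerivAt F (G t) t := by
    intro t ht
    have h := HasDerivAt.fun_sum (fun i (_ : i ∈ Finset.univ) =>
      HasDerivAt.fun_sum (fun j (_ : j ∈ Finset.univ) =>
        hasDerivAt_norm_sq' ((hv i t ht).fun_sub (hv j t ht))))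
    have halg := alg_identity hN (fun i j => a ‖x t i - x t j‖)
      (fun i j => by rw [norm_sub_rev]) (v t)
    rw [halg] at h
    exact h
  -- nonpositivity of G for t ≥ 0
  have hG0 : ∀ t, G t ≤ 0 := by
    intro t
    have : (0:ℝ) ≤ ∑ i, ∑ j, a ‖x t i - x t j‖ * ‖v t i - v t j‖^2 :=
      Finset.sum_nonneg fun i _ => Finset.sum_nonneg fun j _ =>
        mul_nonneg (ha_pos _ (norm_nonneg _)).le (sq_nonneg _)
    simp only [hGdef]; nlinarith
  -- continuity on [0,∞)
  have hvc : ∀ (i : Fin N), ContinuousOn (fun t => v t i) (Set.Ici 0) := fun i =>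
    fun t ht => ((hv i t ht).continuousAt).continuousWithinAt
  have hxc : ∀ (i : Fin N), ContinuousOn (fun t => x t i) (Set.Ici 0) := fun i =>
    fun t ht => ((hx i t ht).continuousAt).continuousWithinAt
  -- S is closed
  have hScl : IsClosed S := by
    have hSeq : S = ⋂ i, ⋂ j, (Set.Ici (0:ℝ) ∩ (fun t => ‖x t i - x t j‖) ⁻¹' Set.Iic R) := by
      ext t
      simp only [hSdef, Set.mem_setOf_eq, Set.mem_iInter, Set.mem_inter_iff, Set.mem_Ici,
        Set.mem_preimage, Set.mem_Iic]
      constructor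
      · rintro ⟨h0, h1⟩ i j; exact ⟨h0, h1 i j⟩
      · intro h
        refine ⟨(h ⟨0, hN⟩ ⟨0, hN⟩).1, fun i j => (h i j).2⟩
    rw [hSeq]
    exact isClosed_iInter fun i => isClosed_iInter fun j =>
      (((hxc i).sub (hxc j)).norm).preimage_isClosed_of_isClosed isClosed_Ici isClosed_Iic
  -- G is interval integrable on [s,t] ⊆ [0,∞)
  have hGint : ∀ s t : ℝ, 0 ≤ s → s ≤ t → IntervalIntegrable G volume s t := by
    intro s t hs hst
    rw [intervalIntegrable_iff, Set.uIoc_of_le hst]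
    apply MeasureTheory.IntegrableOn.mono_set (t := Set.Icc s t) _ Set.Ioc_subset_Icc_self
    have hIcc : Set.Icc s t ⊆ Set.Ici (0:ℝ) := fun u hu => hs.trans hu.1
    have haa_anti : Antitone (fun r => a (max r 0)) := by
      intro r r' hrr'
      exact ha_mono _ _ (le_max_right r 0) (max_le_max hrr' le_rfl)
    have haa_meas : Measurable (fun r => a (max r 0)) := haa_anti.measurable
    have key : ∀ i j : Fin N, IntegrableOn
        (fun u => a ‖x u i - x u j‖ * ‖v u i - v u j‖^2) (Set.Icc s t) volume := by
      intro i j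
      have hf : ContinuousOn (fun u => ‖x u i - x u j‖) (Set.Icc s t) :=
        ((((hxc i).sub (hxc j)).norm)).mono hIcc
      have hh : ContinuousOn (fun u => ‖v u i - v u j‖^2) (Set.Icc s t) :=
        ((((hvc i).sub (hvc j)).norm).mono hIcc).pow 2
      obtain ⟨M, hM⟩ := (isCompact_Icc (a := s) (b := t)).exists_bound_of_continuousOn hh
      have hmeasf : AEMeasurable (fun u => a ‖x u i - x u j‖)
          (volume.restrict (Set.Icc s t)) := by
        have h1 : AEMeasurable (fun u => ‖x u i - x u j‖)
            (volume.restrict (Set.Icc s t)) := hf.aemeasurable measurableSet_Icc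
        have heq : (fun u => a ‖x u i - x u j‖)
            = fun u => (fun r => a (max r 0)) ‖x u i - x u j‖ := by
          funext u; simp [max_eq_left (norm_nonneg _)]
        rw [heq]
        exact haa_meas.comp_aemeasurable h1
      have hmeash : AEMeasurable (fun u => ‖v u i - v u j‖^2)
          (volume.restrict (Set.Icc s t)) := hh.aemeasurable measurableSet_Icc
      refine Integrable.mono' (g := fun _ => a 0 * max M 0)
        (integrableOn_const measure_Icc_lt_top.ne) ?_ ?_
      · exact (hmeasf.mul hmeash).aestronglyMeasurable
      · filter_upwards [ae_restrict_mem measurableSet_Icc] with u hu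
        have h1 : 0 < a ‖x u i - x u j‖ := ha_pos _ (norm_nonneg _)
        have h2 : a ‖x u i - x u j‖ ≤ a 0 := ha_mono 0 _ le_rfl (norm_nonneg _)
        have h3 : ‖v u i - v u j‖^2 ≤ max M 0 := by
          have := hM u hu
          have h4 : ‖v u i - v u j‖^2 ≤ M := le_of_abs_le (by simpa using this)
          exact h4.trans (le_max_left _ _)
        have h5 : (0:ℝ) ≤ ‖v u i - v u j‖^2 := sq_nonneg _
        rw [Real.norm_eq_abs, abs_of_nonneg (mul_nonneg h1.le h5)]
        exact mul_le_mul h2 h3 h5 (le_trans h1.le h2)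
    have h1 : IntegrableOn
        (fun u => ∑ i, ∑ j, a ‖x u i - x u j‖ * ‖v u i - v u j‖^2) (Set.Icc s t) volume :=
      integrable_finset_sum _ (fun i _ => integrable_finset_sum _ (fun j _ => key i j))
    exact h1.const_mul (-2)
  -- FTC
  have hFTC : ∀ s t : ℝ, 0 ≤ s → s ≤ t → F t - F s = ∫ u in s..t, G u := by
    intro s t hs hst
    exact (intervalIntegral.integral_eq_sub_of_hasDerivAt
      (fun u hu => by
        rw [Set.uIcc_of_le hst] at hu
        exact hFderiv u (hs.trans hu.1)) (hGint s t hs hst)).symm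
  -- F is antitone on [0,∞)
  have hanti : ∀ s t : ℝ, 0 ≤ s → s ≤ t → F t ≤ F s := by
    intro s t hs hst
    have h1 := hFTC s t hs hst
    have h2 : (∫ u in s..t, G u) ≤ ∫ u in s..t, (0:ℝ) :=
      intervalIntegral.integral_mono_on hst (hGint s t hs hst)
        intervalIntegrable_const (fun u _ => hG0 u)
    simp only [intervalIntegral.integral_zero] at h2
    linarith
  -- key : F tends to 0
  have hlim : Tendsto F atTop (nhds 0) := by
    have haR : 0 < a R := ha_pos R hR.le
    have hexist : ∀ ε : ℝ, 0 < ε → ∃ T, 0 ≤ T ∧ F T < ε := by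
      intro ε hε
      by_contra hcon
      push_neg at hcon
      set c : ℝ := 2 * a R * ε with hcdef
      have hc : 0 < c := by positivity
      -- choose a time horizon with large occupation measure
      have hmono : Monotone (fun n : ℕ => S ∩ Set.Icc (0:ℝ) n) := by
        intro m n hmn
        exact Set.inter_subset_inter_right _ (Set.Icc_subset_Icc le_rfl (by exact_mod_cast hmn))
      have hU : ⋃ n : ℕ, (S ∩ Set.Icc (0:ℝ) n) = S := by
        ext u
        simp only [Set.mem_iUnion, Set.mem_inter_iff, Set.mem_Icc]
        constructor
        · rintro ⟨n, hn, _⟩; exact hn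
        · intro hu
          exact ⟨⌈u⌉₊, hu, hu.1, Nat.le_ceil u⟩
      have hsup : ⨆ n : ℕ, volume (S ∩ Set.Icc (0:ℝ) n) = ⊤ := by
        rw [← hmono.directed_le.measure_iUnion, hU, hmeas]
      set K : ℝ := F 0 / c + 1 with hKdef
      have hKpos : 0 < K := by
        have := hF0 0; positivity
      have hlt : ENNReal.ofReal K < ⨆ n : ℕ, volume (S ∩ Set.Icc (0:ℝ) n) := by
        rw [hsup]; exact ENNReal.ofReal_lt_top
      obtain ⟨n, hn⟩ := lt_iSup_iff.mp hlt
      have hIccIoc : volume (S ∩ Set.Icc (0:ℝ) n) ≤ volume (S ∩ Set.Ioc (0:ℝ) n) := by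
        have hsub : S ∩ Set.Icc (0:ℝ) n ⊆ (S ∩ Set.Ioc (0:ℝ) n) ∪ {0} := by
          rintro u ⟨huS, hu0, hun⟩
          rcases eq_or_lt_of_le hu0 with h | h
          · right; simp [← h]
          · left; exact ⟨huS, h, hun⟩
        calc volume (S ∩ Set.Icc (0:ℝ) n) ≤ volume ((S ∩ Set.Ioc (0:ℝ) n) ∪ {0}) :=
              measure_mono hsub
          _ ≤ volume (S ∩ Set.Ioc (0:ℝ) n) + volume ({0} : Set ℝ) := measure_union_le _ _
          _ = volume (S ∩ Set.Ioc (0:ℝ) n) := by simp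
      have hfin : volume (S ∩ Set.Ioc (0:ℝ) n) < ⊤ :=
        lt_of_le_of_lt (measure_mono Set.inter_subset_right) measure_Ioc_lt_top
      have hK' : K < (volume (S ∩ Set.Ioc (0:ℝ) n)).toReal := by
        rw [← ENNReal.ofReal_lt_iff_lt_toReal hKpos.le hfin.ne]
        exact lt_of_lt_of_le hn hIccIoc
      have hTnn : (0:ℝ) ≤ (n:ℝ) := Nat.cast_nonneg n
      have hFTCn := hFTC 0 n le_rfl hTnn
      have hGleq : ∀ u ∈ Set.Icc (0:ℝ) (n:ℝ), G u ≤ S.indicator (fun _ => -c) u := by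
        intro u hu
        by_cases huS : u ∈ S
        · rw [Set.indicator_of_mem huS]
          have h1 : a R * F u ≤ ∑ i, ∑ j, a ‖x u i - x u j‖ * ‖v u i - v u j‖^2 := by
            rw [hFdef]
            simp only [Finset.mul_sum]
            refine Finset.sum_le_sum fun i _ => Finset.sum_le_sum fun j _ => ?_
            exact mul_le_mul_of_nonneg_right
              (ha_mono _ _ (norm_nonneg _) (huS.2 i j)) (sq_nonneg _)
          have h2 : ε ≤ F u := hcon u huS.1
          have h3 : a R * ε ≤ a R * F u := mul_le_mul_of_nonneg_left h2 haR.le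
          simp only [hGdef, hcdef]
          linarith
        · rw [Set.indicator_of_notMem huS]; exact hG0 u
      have hindint : IntervalIntegrable (S.indicator (fun _ => -c)) volume 0 n := by
        rw [intervalIntegrable_iff, Set.uIoc_of_le hTnn]
        exact (integrableOn_const measure_Ioc_lt_top.ne).indicator hScl.measurableSet
      have hmono2 := intervalIntegral.integral_mono_on hTnn (hGint 0 n le_rfl hTnn)
        hindint hGleq
      have hval : (∫ u in (0:ℝ)..(n:ℝ), S.indicator (fun _ => -c) u)
          = -c * (volume (S ∩ Set.Ioc (0:ℝ) n)).toReal := by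
        rw [intervalIntegral.integral_of_le hTnn,
          MeasureTheory.integral_indicator hScl.measurableSet,
          MeasureTheory.setIntegral_const, measureReal_restrict_apply hScl.measurableSet]
        rw [smul_eq_mul, measureReal_def]; ring
      have hprod : c * K < c * (volume (S ∩ Set.Ioc (0:ℝ) n)).toReal :=
        mul_lt_mul_of_pos_left hK' hc
      have hcK : c * K = F 0 + c := by
        rw [hKdef]; field_simp
      have hFn := hF0 (n:ℝ)
      rw [hval] at hmono2
      linarith
    rw [Metric.tendsto_atTop]
    intro ε hε
    obtain ⟨T, hT0, hTε⟩ := hexist ε hε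
    refine ⟨T, fun t ht => ?_⟩
    rw [Real.dist_eq, sub_zero, abs_of_nonneg (hF0 t)]
    exact lt_of_le_of_lt (hanti T t hT0 ht) hTε
  -- conclusion
  intro i
  have hbound : ∀ t, ‖v t i - (N : ℝ)⁻¹ • ∑ j, v t j‖ ≤ Real.sqrt (F t) := by
    intro t
    have hterm : ∀ j, ‖v t i - v t j‖ ≤ Real.sqrt (F t) := by
      intro j
      have h1 : ‖v t i - v t j‖^2 ≤ F t := by
        have hj := Finset.single_le_sum (f := fun j' => ‖v t i - v t j'‖^2)
          (fun j' _ => sq_nonneg _) (Finset.mem_univ j)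
        have hi := Finset.single_le_sum (f := fun i' => ∑ j', ‖v t i' - v t j'‖^2)
          (fun i' _ => Finset.sum_nonneg fun _ _ => sq_nonneg _) (Finset.mem_univ i)
        exact hj.trans hi
      calc ‖v t i - v t j‖ = Real.sqrt (‖v t i - v t j‖^2) :=
            (Real.sqrt_sq (norm_nonneg _)).symm
        _ ≤ Real.sqrt (F t) := Real.sqrt_le_sqrt h1
    have hNne : (N:ℝ) ≠ 0 := Nat.cast_ne_zero.mpr hN.ne'
    have hrepr : v t i - (N:ℝ)⁻¹ • ∑ j, v t j = (N:ℝ)⁻¹ • ∑ j, (v t i - v t j) := by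
      rw [Finset.sum_sub_distrib, smul_sub]
      congr 1
      rw [Finset.sum_const, Finset.card_univ, Fintype.card_fin,
        ← Nat.cast_smul_eq_nsmul ℝ, smul_smul, inv_mul_cancel₀ hNne, one_smul]
    rw [hrepr]
    have hNpos : (0:ℝ) < (N:ℝ)⁻¹ := by positivity
    calc ‖(N:ℝ)⁻¹ • ∑ j, (v t i - v t j)‖
        = (N:ℝ)⁻¹ * ‖∑ j, (v t i - v t j)‖ := by
          rw [norm_smul, Real.norm_eq_abs, abs_of_nonneg hNpos.le]
      _ ≤ (N:ℝ)⁻¹ * ∑ j, ‖v t i - v t j‖ :=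
          mul_le_mul_of_nonneg_left (norm_sum_le _ _) hNpos.le
      _ ≤ (N:ℝ)⁻¹ * ∑ _j : Fin N, Real.sqrt (F t) :=
          mul_le_mul_of_nonneg_left (Finset.sum_le_sum fun j _ => hterm j) hNpos.le
      _ = Real.sqrt (F t) := by
          rw [Finset.sum_const, Finset.card_univ, Fintype.card_fin, nsmul_eq_mul]
          field_simp
  have hsqrt : Tendsto (fun t => Real.sqrt (F t)) atTop (nhds 0) := by
    have := (Real.continuous_sqrt.tendsto 0).comp hlim
    simpa [Function.comp_def] using this
  exact squeeze_zero (fun t => norm_nonneg _) hbound hsqrt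
end

section
/- Let (x,v) : [0,∞) → (ℝ^d)^N × (ℝ^d)^N be a solution of the Cucker-Smale system ẋ_i = v_i, v̇_i = (1/N) Σ_{j=1}^N a(‖x_i − x_j‖)(v_j − v_i), with kernel a : [0,∞) → (0,∞) nonincreasing, bounded and Lipschitz continuous. Define X(t) = B(x(t),x(t)) and V(t) = B(v(t),v(t)). Then for every t ≥ 0 one has d/dt V(t) ≤ −2 a(√(2N X(t))) V(t); in particular V is nonincreasing. -/
open scoped BigOperators InnerProductSpace
open MeasureTheory Filter

/-- The symmetric bilinear form `B(v,w) = (1/(2N²)) ∑ᵢ∑ⱼ (vᵢ-vⱼ)·(wᵢ-wⱼ)`. -/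
noncomputable def bform {d N : ℕ} (v w : Fin N → EuclideanSpace ℝ (Fin d)) : ℝ :=
  (2 * (N : ℝ) ^ 2)⁻¹ * ∑ i, ∑ j, ⟪v i - v j, w i - w j⟫_ℝ

section Aux

variable {E : Type*} [NormedAddCommGroup E] [InnerProductSpace ℝ E]

lemma cs_inner_pair (p q r : E) :
    ⟪q - p, p - r⟫_ℝ + ⟪p - q, q - r⟫_ℝ = -‖p - q‖ ^ 2 := by
  have h1 : ⟪p - q, q - r⟫_ℝ = -⟪q - p, q - r⟫_ℝ := by
    rw [show p - q = -(q - p) by abel, inner_neg_left]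
  rw [h1, ← sub_eq_add_neg, ← inner_sub_right,
    show (p - r) - (q - r) = -(q - p) by abel, inner_neg_right,
    real_inner_self_eq_norm_sq, show q - p = -(p - q) by abel, norm_neg]

/-- The key Cucker–Smale dissipation identity. -/
lemma cs_identity {N : ℕ} (hN : 0 < N) (b : Fin N → Fin N → ℝ)
    (hb : ∀ i j, b i j = b j i) (u : Fin N → E) :
    ∑ i, ∑ j, ⟪((N:ℝ)⁻¹ • ∑ k, b i k • (u k - u i)) -
        ((N:ℝ)⁻¹ • ∑ k, b j k • (u k - u j)), u i - u j⟫_ℝ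
      = -∑ i, ∑ j, b i j * ‖u i - u j‖ ^ 2 := by
  set F : Fin N → E := fun i => (N:ℝ)⁻¹ • ∑ k, b i k • (u k - u i) with hF
  have hNn : (N : ℝ) ≠ 0 := by exact_mod_cast hN.ne'
  -- Step 1: antisymmetry collapses the difference to twice a single sum
  have h1 : ∑ i, ∑ j, ⟪F j, u i - u j⟫_ℝ = -∑ i, ∑ j, ⟪F i, u i - u j⟫_ℝ := by
    rw [Finset.sum_comm]
    rw [← Finset.sum_neg_distrib]
    refine Finset.sum_congr rfl fun i _ => ?_
    rw [← Finset.sum_neg_distrib]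
    refine Finset.sum_congr rfl fun j _ => ?_
    rw [show u j - u i = -(u i - u j) by abel, inner_neg_right]
  have hsplit : ∑ i, ∑ j, ⟪F i - F j, u i - u j⟫_ℝ
      = 2 * ∑ i, ∑ j, ⟪F i, u i - u j⟫_ℝ := by
    simp_rw [inner_sub_left]
    rw [show (∑ i, ∑ j, (⟪F i, u i - u j⟫_ℝ - ⟪F j, u i - u j⟫_ℝ)) =
        (∑ i, ∑ j, ⟪F i, u i - u j⟫_ℝ) - ∑ i, ∑ j, ⟪F j, u i - u j⟫_ℝ from by
          simp [Finset.sum_sub_distrib], h1]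
    ring
  -- Step 2: expand F
  have h2 : ∀ i j : Fin N, ⟪F i, u i - u j⟫_ℝ
      = (N:ℝ)⁻¹ * ∑ k, b i k * ⟪u k - u i, u i - u j⟫_ℝ := by
    intro i j
    rw [hF]
    simp only [real_inner_smul_left, sum_inner, real_inner_smul_left]
    try rw [Finset.mul_sum]
  set T : ℝ := ∑ i, ∑ j, ∑ k, b i k * ⟪u k - u i, u i - u j⟫_ℝ with hTdef
  have h3 : ∑ i, ∑ j, ⟪F i, u i - u j⟫_ℝ = (N:ℝ)⁻¹ * T := by
    rw [hTdef, Finset.mul_sum]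
    refine Finset.sum_congr rfl fun i _ => ?_
    rw [Finset.mul_sum]
    exact Finset.sum_congr rfl fun j _ => h2 i j
  have eA : T = ∑ i, ∑ k, ∑ j, b i k * ⟪u k - u i, u i - u j⟫_ℝ :=
    Finset.sum_congr rfl fun i _ => Finset.sum_comm
  -- Step 3: swap i and k
  have h4 : T = ∑ i, ∑ j, ∑ k, b i k * ⟪u i - u k, u k - u j⟫_ℝ := by
    have e2 : (∑ i, ∑ k, ∑ j, b i k * ⟪u k - u i, u i - u j⟫_ℝ)
        = ∑ k, ∑ i, ∑ j, b i k * ⟪u k - u i, u i - u j⟫_ℝ := Finset.sum_comm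
    have e3 : (∑ i, ∑ j, ∑ k, b i k * ⟪u i - u k, u k - u j⟫_ℝ)
        = ∑ i, ∑ k, ∑ j, b i k * ⟪u i - u k, u k - u j⟫_ℝ :=
      Finset.sum_congr rfl fun i _ => Finset.sum_comm
    rw [eA, e2, e3]
    refine Finset.sum_congr rfl fun p _ => Finset.sum_congr rfl fun q _ =>
      Finset.sum_congr rfl fun j _ => ?_
    rw [hb q p]
  have eB : T = ∑ i, ∑ k, ∑ j, b i k * ⟪u i - u k, u k - u j⟫_ℝ :=
    h4.trans (Finset.sum_congr rfl fun i _ => Finset.sum_comm)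
  have h5 : 2 * T = -(N : ℝ) * ∑ i, ∑ k, b i k * ‖u i - u k‖ ^ 2 := by
    have hTT : T + T = ∑ i, ∑ k, ∑ j : Fin N, (b i k * ⟪u k - u i, u i - u j⟫_ℝ
        + b i k * ⟪u i - u k, u k - u j⟫_ℝ) := by
      nth_rewrite 1 [eA]
      nth_rewrite 1 [eB]
      simp only [← Finset.sum_add_distrib]
    have hrow : ∀ i k : Fin N, (∑ j : Fin N, (b i k * ⟪u k - u i, u i - u j⟫_ℝ
        + b i k * ⟪u i - u k, u k - u j⟫_ℝ)) = (N:ℝ) * (b i k * (-‖u i - u k‖ ^ 2)) := by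
      intro i k
      have hterm : ∀ j : Fin N, b i k * ⟪u k - u i, u i - u j⟫_ℝ
          + b i k * ⟪u i - u k, u k - u j⟫_ℝ = b i k * (-‖u i - u k‖ ^ 2) := fun j => by
        rw [← mul_add, cs_inner_pair (u i) (u k) (u j)]
      rw [Finset.sum_congr rfl fun j _ => hterm j, Finset.sum_const, Finset.card_univ,
        Fintype.card_fin, nsmul_eq_mul]
    rw [two_mul, hTT]
    rw [Finset.sum_congr rfl fun i _ => Finset.sum_congr rfl fun k _ => hrow i k]
    rw [show -(N:ℝ) * ∑ i, ∑ k, b i k * ‖u i - u k‖ ^ 2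
      = ∑ i, -((N:ℝ) * ∑ k, b i k * ‖u i - u k‖ ^ 2) from by
        rw [Finset.sum_neg_distrib, ← Finset.mul_sum, neg_mul]]
    refine Finset.sum_congr rfl fun i _ => ?_
    rw [Finset.mul_sum, ← Finset.sum_neg_distrib]
    exact Finset.sum_congr rfl fun k _ => by ring
  rw [hsplit, h3]
  have : 2 * ((N:ℝ)⁻¹ * T) = (N:ℝ)⁻¹ * (2 * T) := by ring
  rw [this, h5]
  field_simp

lemma sum_sq_nonneg_inner {N : ℕ} (u : Fin N → E) :
    0 ≤ ∑ i, ∑ j, ⟪u i - u j, u i - u j⟫_ℝ :=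
  Finset.sum_nonneg fun i _ => Finset.sum_nonneg fun j _ => real_inner_self_nonneg

end Aux

lemma bform_self_nonneg {d N : ℕ} (u : Fin N → EuclideanSpace ℝ (Fin d)) :
    0 ≤ bform u u := by
  unfold bform
  apply mul_nonneg (by positivity) (sum_sq_nonneg_inner u)

/-- Pairwise distances are controlled by `√(2N · B(x,x))`. -/
lemma dist_le_sqrt_bform {d N : ℕ} (hN : 0 < N) (x : Fin N → EuclideanSpace ℝ (Fin d))
    (i j : Fin N) : ‖x i - x j‖ ≤ Real.sqrt (2 * N * bform x x) := by
  apply Real.le_sqrt_of_sq_le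
  have hNn : (N : ℝ) ≠ 0 := by exact_mod_cast hN.ne'
  set c : EuclideanSpace ℝ (Fin d) := (N:ℝ)⁻¹ • ∑ k, x k with hc
  set y : Fin N → EuclideanSpace ℝ (Fin d) := fun k => x k - c with hy
  have hdiff : ∀ k l : Fin N, x k - x l = y k - y l := by
    intro k l; rw [hy]; simp
  have hsum0 : ∑ k, y k = 0 := by
    rw [hy]
    rw [Finset.sum_sub_distrib, Finset.sum_const, Finset.card_univ, Fintype.card_fin, hc]
    rw [← Nat.cast_smul_eq_nsmul ℝ, smul_smul, mul_inv_cancel₀ hNn, one_smul, sub_self]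
  -- identity: ∑∑ ‖y k - y l‖² = 2N ∑ ‖y k‖²
  have hid : ∑ k, ∑ l, ‖y k - y l‖ ^ 2 = 2 * (N:ℝ) * ∑ k, ‖y k‖ ^ 2 := by
    have hrow : ∀ k : Fin N, ∑ l, ‖y k - y l‖ ^ 2
        = (N:ℝ) * ‖y k‖ ^ 2 + ∑ l, ‖y l‖ ^ 2 := by
      intro k
      simp_rw [norm_sub_sq_real]
      rw [Finset.sum_add_distrib, Finset.sum_sub_distrib, Finset.sum_const,
        Finset.card_univ, Fintype.card_fin, ← Finset.mul_sum, ← inner_sum, hsum0,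
        inner_zero_right]
      push_cast
      ring_nf
    simp_rw [hrow]
    rw [Finset.sum_add_distrib, Finset.sum_const, Finset.card_univ, Fintype.card_fin,
      ← Finset.mul_sum]
    push_cast
    ring_nf
  -- pointwise bound
  have hpt : ‖y i - y j‖ ^ 2 ≤ 2 * ∑ k, ‖y k‖ ^ 2 := by
    by_cases hij : i = j
    · subst hij
      simp
      positivity
    · have h1 : ‖y i - y j‖ ^ 2 ≤ 2 * (‖y i‖ ^ 2 + ‖y j‖ ^ 2) := by
        rw [norm_sub_sq_real]
        nlinarith [(abs_le.mp (abs_real_inner_le_norm (y i) (y j))).1,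
          sq_nonneg (‖y i‖ + ‖y j‖), sq_nonneg (‖y i‖ - ‖y j‖)]
      have h2 : ‖y i‖ ^ 2 + ‖y j‖ ^ 2 ≤ ∑ k, ‖y k‖ ^ 2 := by
        have : ({i, j} : Finset (Fin N)).sum (fun k => ‖y k‖ ^ 2)
            = ‖y i‖ ^ 2 + ‖y j‖ ^ 2 := by
          rw [Finset.sum_insert (by simp [hij]), Finset.sum_singleton]
        rw [← this]
        exact Finset.sum_le_sum_of_subset_of_nonneg (Finset.subset_univ _)
          (fun k _ _ => by positivity)
      linarith
  -- conclude
  have hbf : 2 * (N:ℝ) * bform x x = (N:ℝ)⁻¹ * ∑ k, ∑ l, ‖x k - x l‖ ^ 2 := by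
    unfold bform
    simp_rw [real_inner_self_eq_norm_sq]
    field_simp
  have hxy : (∑ k, ∑ l, ‖x k - x l‖ ^ 2) = ∑ k, ∑ l, ‖y k - y l‖ ^ 2 := by
    refine Finset.sum_congr rfl fun k _ => Finset.sum_congr rfl fun l _ => by
      rw [hdiff k l]
  rw [hbf, hxy, hid, hdiff i j]
  calc ‖y i - y j‖ ^ 2 ≤ 2 * ∑ k, ‖y k‖ ^ 2 := hpt
    _ = (N:ℝ)⁻¹ * (2 * (N:ℝ) * ∑ k, ‖y k‖ ^ 2) := by field_simp
    _ ≤ (N:ℝ)⁻¹ * (2 * (N:ℝ) * ∑ k, ‖y k‖ ^ 2) := le_refl _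

/-- Along any solution of the Cucker-Smale system, the functional
`V(t) = B(v(t),v(t))` satisfies `dV/dt ≤ -2 a(√(2N X(t))) V(t)`; in particular `V`
is nonincreasing on `[0,∞)`. -/
theorem cuckerSmale_V_decay
    {d N : ℕ} (hN : 0 < N)
    (a : ℝ → ℝ)
    (ha_pos : ∀ r, 0 ≤ r → 0 < a r)
    (ha_mono : ∀ r s, 0 ≤ r → r ≤ s → a s ≤ a r)
    (ha_bdd : ∃ C, ∀ r, 0 ≤ r → a r ≤ C)
    (ha_lip : ∃ K : NNReal, LipschitzWith K a)
    (x v : ℝ → Fin N → EuclideanSpace ℝ (Fin d))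
    (hx : ∀ (i : Fin N), ∀ t, 0 ≤ t → HasDerivAt (fun s => x s i) (v t i) t)
    (hv : ∀ (i : Fin N), ∀ t, 0 ≤ t → HasDerivAt (fun s => v s i)
      ((N : ℝ)⁻¹ • ∑ j, a ‖x t i - x t j‖ • (v t j - v t i)) t) :
    (∀ t, 0 ≤ t → ∃ V' : ℝ, HasDerivAt (fun s => bform (v s) (v s)) V' t ∧
      V' ≤ -2 * a (Real.sqrt (2 * N * bform (x t) (x t))) * bform (v t) (v t)) ∧
    AntitoneOn (fun t => bform (v t) (v t)) (Set.Ici 0) := by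
  have hNn : (N : ℝ) ≠ 0 := by exact_mod_cast hN.ne'
  have key : ∀ t, 0 ≤ t → ∃ V' : ℝ, HasDerivAt (fun s => bform (v s) (v s)) V' t ∧
      V' ≤ -2 * a (Real.sqrt (2 * N * bform (x t) (x t))) * bform (v t) (v t) := by
    intro t ht
    set F : Fin N → EuclideanSpace ℝ (Fin d) :=
      fun i => (N : ℝ)⁻¹ • ∑ j, a ‖x t i - x t j‖ • (v t j - v t i) with hFdef
    refine ⟨(2 * (N : ℝ) ^ 2)⁻¹ * ∑ i, ∑ j,
      (⟪v t i - v t j, F i - F j⟫_ℝ + ⟪F i - F j, v t i - v t j⟫_ℝ), ?_, ?_⟩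
    · have : HasDerivAt (fun s => (2 * (N : ℝ) ^ 2)⁻¹ *
          ∑ i, ∑ j, ⟪v s i - v s j, v s i - v s j⟫_ℝ)
          ((2 * (N : ℝ) ^ 2)⁻¹ * ∑ i, ∑ j,
            (⟪v t i - v t j, F i - F j⟫_ℝ + ⟪F i - F j, v t i - v t j⟫_ℝ)) t := by
        apply HasDerivAt.const_mul
        apply HasDerivAt.fun_sum
        intro i _
        apply HasDerivAt.fun_sum
        intro j _
        exact ((hv i t ht).sub (hv j t ht)).inner ℝ ((hv i t ht).sub (hv j t ht))
          |>.congr_deriv rfl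
      exact this
    · -- the inequality
      set b : Fin N → Fin N → ℝ := fun i j => a ‖x t i - x t j‖ with hbdef
      have hbsymm : ∀ i j, b i j = b j i := by
        intro i j; rw [hbdef]; simp [norm_sub_rev]
      set α : ℝ := a (Real.sqrt (2 * N * bform (x t) (x t))) with hα
      have hαpos : 0 < α := ha_pos _ (Real.sqrt_nonneg _)
      have hble : ∀ i j, α ≤ b i j := by
        intro i j
        exact ha_mono _ _ (norm_nonneg _) (dist_le_sqrt_bform hN (x t) i j)
      -- rewrite the derivative via cs_identity
      have hsum : ∑ i, ∑ j, (⟪v t i - v t j, F i - F j⟫_ℝ + ⟪F i - F j, v t i - v t j⟫_ℝ)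
          = 2 * (-∑ i, ∑ j, b i j * ‖v t i - v t j‖ ^ 2) := by
        have e1 : ∀ i j : Fin N, ⟪v t i - v t j, F i - F j⟫_ℝ
            + ⟪F i - F j, v t i - v t j⟫_ℝ = 2 * ⟪F i - F j, v t i - v t j⟫_ℝ := by
          intro i j
          rw [real_inner_comm]
          ring
        simp_rw [e1]
        simp_rw [← Finset.mul_sum]
        congr 1
        exact cs_identity hN b hbsymm (v t)
      rw [hsum]
      -- now: (2N²)⁻¹ * (2 * (-∑∑ b ‖w‖²)) ≤ -2α * bform (v t) (v t)
      have hVform : bform (v t) (v t)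
          = (2 * (N : ℝ) ^ 2)⁻¹ * ∑ i, ∑ j, ‖v t i - v t j‖ ^ 2 := by
        unfold bform
        simp_rw [real_inner_self_eq_norm_sq]
      have hsumle : α * ∑ i, ∑ j, ‖v t i - v t j‖ ^ 2
          ≤ ∑ i, ∑ j, b i j * ‖v t i - v t j‖ ^ 2 := by
        rw [Finset.mul_sum]
        refine Finset.sum_le_sum fun i _ => ?_
        rw [Finset.mul_sum]
        refine Finset.sum_le_sum fun j _ => ?_
        exact mul_le_mul_of_nonneg_right (hble i j) (by positivity)
      rw [hVform]
      have hc : (0:ℝ) < 2 * (N:ℝ) ^ 2 := by positivity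
      rw [show -2 * α * ((2 * (N : ℝ) ^ 2)⁻¹ * ∑ i, ∑ j, ‖v t i - v t j‖ ^ 2)
        = (2 * (N : ℝ) ^ 2)⁻¹ * (2 * (-(α * ∑ i, ∑ j, ‖v t i - v t j‖ ^ 2))) from by ring]
      apply mul_le_mul_of_nonneg_left _ (le_of_lt (inv_pos.mpr hc))
      have := hsumle
      linarith
  refine ⟨key, ?_⟩
  apply antitoneOn_of_deriv_nonpos (convex_Ici 0)
  · intro s hs
    obtain ⟨V', hd, _⟩ := key s hs
    exact hd.continuousAt.continuousWithinAt
  · intro s hs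
    rw [interior_Ici] at hs
    obtain ⟨V', hd, _⟩ := key s (le_of_lt hs)
    exact hd.differentiableAt.differentiableWithinAt
  · intro s hs
    rw [interior_Ici] at hs
    obtain ⟨V', hd, hle⟩ := key s (le_of_lt hs)
    rw [hd.deriv]
    refine hle.trans ?_
    have h1 : 0 < a (Real.sqrt (2 * N * bform (x s) (x s))) :=
      ha_pos _ (Real.sqrt_nonneg _)
    have h2 : 0 ≤ bform (v s) (v s) := bform_self_nonneg (v s)
    nlinarith
end

section
/- Let a : [0,∞) → (0,∞) be nonincreasing, strictly positive, bounded and Lipschitz continuous, and let (x^0,v^0) ∈ (ℝ^d)^N × (ℝ^d)^N with X_0 = B(x^0,x^0) and V_0 = B(v^0,v^0). If ∫_{√X_0}^{∞} a(√(2N) r) dr ≥ √V_0, then the solution of the Cucker-Smale system ẋ_i = v_i, v̇_i = (1/N) Σ_{j=1}^N a(‖x_i − x_j‖)(v_j − v_i) with initial datum (x^0,v^0) tends to consensus, i.e. ‖v_i(t) − v̄(t)‖ → 0 as t → ∞ for every i = 1,...,N. -/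
open scoped BigOperators InnerProductSpace
open MeasureTheory Filter

section aux
variable {d N : ℕ}

lemma sum_expand (p q : Fin N → EuclideanSpace ℝ (Fin d)) :
    ∑ i, ∑ j, ⟪p i - p j, q i - q j⟫_ℝ
      = 2 * N * ∑ i, ⟪p i, q i⟫_ℝ - 2 * ⟪∑ i, p i, ∑ i, q i⟫_ℝ := by
  have h1 : ∑ i, ∑ j, ⟪p i, q j⟫_ℝ = ⟪∑ i, p i, ∑ i, q i⟫_ℝ := by
    rw [sum_inner]; exact Finset.sum_congr rfl fun i _ => (inner_sum _ _ _).symm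
  have h2 : ∑ i : Fin N, ∑ j : Fin N, ⟪p j, q i⟫_ℝ = ⟪∑ i, p i, ∑ i, q i⟫_ℝ := by
    rw [Finset.sum_comm]; exact h1
  simp only [inner_sub_left, inner_sub_right, Finset.sum_sub_distrib]
  simp only [Finset.sum_const, Finset.card_univ, Fintype.card_fin, nsmul_eq_mul, h1, h2]
  rw [← Finset.mul_sum]; ring
end aux

section aux2
variable {d N : ℕ}
local notation "E" => EuclideanSpace ℝ (Fin d)

lemma bform_centered (hN : 0 < N) (p q : Fin N → EuclideanSpace ℝ (Fin d)) :
    bform p q = (N : ℝ)⁻¹ *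
      ∑ i, ⟪p i - (N : ℝ)⁻¹ • ∑ j, p j, q i - (N : ℝ)⁻¹ • ∑ j, q j⟫_ℝ := by
  have hN' : (N : ℝ) ≠ 0 := Nat.cast_ne_zero.mpr hN.ne'
  rw [bform, sum_expand]
  set c : EuclideanSpace ℝ (Fin d) := (N : ℝ)⁻¹ • ∑ j, p j with hc
  set c' : EuclideanSpace ℝ (Fin d) := (N : ℝ)⁻¹ • ∑ j, q j with hc'
  have e1 : ∀ i : Fin N, ⟪p i - c, q i - c'⟫_ℝ
      = ⟪p i, q i⟫_ℝ - ⟪p i, c'⟫_ℝ - ⟪c, q i⟫_ℝ + ⟪c, c'⟫_ℝ := fun i => by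
    rw [inner_sub_left, inner_sub_right, inner_sub_right]; ring
  have hA : ∑ i, ⟪p i, c'⟫_ℝ = (N:ℝ)⁻¹ * ⟪∑ i, p i, ∑ i, q i⟫_ℝ := by
    rw [← sum_inner, hc', real_inner_smul_right]
  have hB : ∑ i, ⟪c, q i⟫_ℝ = (N:ℝ)⁻¹ * ⟪∑ i, p i, ∑ i, q i⟫_ℝ := by
    rw [← inner_sum, hc, real_inner_smul_left]
  have hC : ⟪c, c'⟫_ℝ = (N:ℝ)⁻¹ * ((N:ℝ)⁻¹ * ⟪∑ i, p i, ∑ i, q i⟫_ℝ) := by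
    rw [hc, hc', real_inner_smul_left, real_inner_smul_right]
  have h : ∑ i, ⟪p i - c, q i - c'⟫_ℝ
      = ∑ i, ⟪p i, q i⟫_ℝ - (N : ℝ)⁻¹ * ⟪∑ i, p i, ∑ i, q i⟫_ℝ := by
    simp only [e1, Finset.sum_add_distrib, Finset.sum_sub_distrib, hA, hB,
      Finset.sum_const, Finset.card_univ, Fintype.card_fin, nsmul_eq_mul, hC]
    field_simp
    ring
  rw [h]
  field_simp

lemma bform_self_eq (hN : 0 < N) (p : Fin N → EuclideanSpace ℝ (Fin d)) :
    bform p p = (N : ℝ)⁻¹ * ∑ i, ‖p i - (N : ℝ)⁻¹ • ∑ j, p j‖ ^ 2 := by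
  rw [bform_centered hN]
  congr 1
  exact Finset.sum_congr rfl fun i _ => real_inner_self_eq_norm_sq _

lemma bform_nonneg (hN : 0 < N) (p : Fin N → EuclideanSpace ℝ (Fin d)) :
    0 ≤ bform p p := by
  rw [bform_self_eq hN]
  positivity

lemma single_le_bform (hN : 0 < N) (p : Fin N → EuclideanSpace ℝ (Fin d)) (i : Fin N) :
    ‖p i - (N : ℝ)⁻¹ • ∑ j, p j‖ ^ 2 ≤ N * bform p p := by
  rw [bform_self_eq hN]
  have hN' : (N : ℝ) ≠ 0 := Nat.cast_ne_zero.mpr hN.ne'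
  rw [← mul_assoc, mul_inv_cancel₀ hN', one_mul]
  exact Finset.single_le_sum (f := fun j => ‖p j - (N : ℝ)⁻¹ • ∑ j, p j‖ ^ 2)
    (fun j _ => sq_nonneg _) (Finset.mem_univ i)

lemma pair_le_bform (hN : 0 < N) (p : Fin N → EuclideanSpace ℝ (Fin d)) (i j : Fin N) :
    ‖p i - p j‖ ^ 2 ≤ 2 * N * bform p p := by
  rcases eq_or_ne i j with rfl | hij
  · simpa using mul_nonneg (by positivity) (bform_nonneg hN p)
  set c := (N : ℝ)⁻¹ • ∑ k, p k
  have h1 : ‖p i - p j‖ ^ 2 ≤ 2 * (‖p i - c‖ ^ 2 + ‖p j - c‖ ^ 2) := by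
    have : p i - p j = (p i - c) - (p j - c) := by abel
    rw [this]
    have hb := norm_sub_le (p i - c) (p j - c)
    nlinarith [norm_nonneg (p i - c), norm_nonneg (p j - c), sq_nonneg (‖p i - c‖ - ‖p j - c‖),
      norm_nonneg ((p i - c) - (p j - c))]
  have h2 : ‖p i - c‖ ^ 2 + ‖p j - c‖ ^ 2 ≤ N * bform p p := by
    rw [bform_self_eq hN]
    have hN' : (N : ℝ) ≠ 0 := Nat.cast_ne_zero.mpr hN.ne'
    rw [← mul_assoc, mul_inv_cancel₀ hN', one_mul]
    have := Finset.sum_le_sum_of_subset_of_nonneg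
      (Finset.subset_univ {i, j}) (fun k _ _ => sq_nonneg (‖p k - c‖))
    rwa [Finset.sum_pair hij] at this
  linarith

lemma bform_cauchySchwarz (hN : 0 < N) (p q : Fin N → EuclideanSpace ℝ (Fin d)) :
    bform p q ≤ Real.sqrt (bform p p) * Real.sqrt (bform q q) := by
  have hN' : (0:ℝ) < N := Nat.cast_pos.mpr hN
  set c := (N : ℝ)⁻¹ • ∑ k, p k
  set c' := (N : ℝ)⁻¹ • ∑ k, q k
  have h1 : ∑ i, ⟪p i - c, q i - c'⟫_ℝ ≤ ∑ i, ‖p i - c‖ * ‖q i - c'‖ :=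
    Finset.sum_le_sum fun i _ => real_inner_le_norm _ _
  have h2 : (∑ i, ‖p i - c‖ * ‖q i - c'‖) ^ 2 ≤
      (∑ i, ‖p i - c‖ ^ 2) * ∑ i, ‖q i - c'‖ ^ 2 :=
    Finset.sum_mul_sq_le_sq_mul_sq _ _ _
  have h3 : ∑ i, ‖p i - c‖ * ‖q i - c'‖ ≤
      Real.sqrt ((∑ i, ‖p i - c‖ ^ 2) * ∑ i, ‖q i - c'‖ ^ 2) := by
    rw [Real.le_sqrt (Finset.sum_nonneg fun i _ => mul_nonneg (norm_nonneg _) (norm_nonneg _))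
      (by positivity)]
    exact h2
  have hpp : ∑ i, ‖p i - c‖ ^ 2 = N * bform p p := by
    rw [bform_self_eq hN, ← mul_assoc, mul_inv_cancel₀ hN'.ne', one_mul]
  have hqq : ∑ i, ‖q i - c'‖ ^ 2 = N * bform q q := by
    rw [bform_self_eq hN, ← mul_assoc, mul_inv_cancel₀ hN'.ne', one_mul]
  have h4 : Real.sqrt ((N * bform p p) * (N * bform q q))
      = N * (Real.sqrt (bform p p) * Real.sqrt (bform q q)) := by
    have : (N * bform p p) * (N * bform q q) = (N:ℝ)^2 * (bform p p * bform q q) := by ring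
    rw [this, Real.sqrt_mul (sq_nonneg _), Real.sqrt_sq hN'.le,
      Real.sqrt_mul (bform_nonneg hN p)]
  have h5 : bform p q = (N:ℝ)⁻¹ * ∑ i, ⟪p i - c, q i - c'⟫_ℝ := bform_centered hN p q
  rw [h5]
  calc (N:ℝ)⁻¹ * ∑ i, ⟪p i - c, q i - c'⟫_ℝ
      ≤ (N:ℝ)⁻¹ * Real.sqrt ((∑ i, ‖p i - c‖ ^ 2) * ∑ i, ‖q i - c'‖ ^ 2) := by
        apply mul_le_mul_of_nonneg_left (h1.trans h3) (by positivity)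
    _ = Real.sqrt (bform p p) * Real.sqrt (bform q q) := by
        rw [hpp, hqq, h4, ← mul_assoc, inv_mul_cancel₀ hN'.ne', one_mul]
end aux2

section dissip
variable {d N : ℕ}

lemma swap_sym_sum (A : Fin N → Fin N → ℝ) (hsym : ∀ i j, A i j = A j i) (f : Fin N → ℝ) :
    ∑ i, ∑ k, A i k * f k = ∑ i, ∑ k, A i k * f i := by
  rw [Finset.sum_comm]
  refine Finset.sum_congr rfl fun i _ => Finset.sum_congr rfl fun k _ => ?_
  rw [hsym]

lemma sum_w_zero (A : Fin N → Fin N → ℝ) (hsym : ∀ i j, A i j = A j i)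
    (v : Fin N → EuclideanSpace ℝ (Fin d)) :
    ∑ i, ∑ k, A i k • (v k - v i) = 0 := by
  have h1 : ∑ i, ∑ k, A i k • v k = ∑ i, ∑ k, A i k • v i := by
    rw [Finset.sum_comm]
    refine Finset.sum_congr rfl fun i _ => Finset.sum_congr rfl fun k _ => ?_
    rw [hsym]
  simp only [smul_sub, Finset.sum_sub_distrib, h1, sub_self]

lemma inner_w_sum (A : Fin N → Fin N → ℝ) (hsym : ∀ i j, A i j = A j i)
    (v : Fin N → EuclideanSpace ℝ (Fin d)) :
    ∑ i, ⟪v i, ∑ k, A i k • (v k - v i)⟫_ℝ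
      = -(2⁻¹ * ∑ i, ∑ k, A i k * ‖v i - v k‖ ^ 2) := by
  have key : ∑ i, ⟪v i, ∑ k, A i k • (v k - v i)⟫_ℝ
      = ∑ i, ∑ k, A i k * ⟪v i, v k - v i⟫_ℝ := by
    refine Finset.sum_congr rfl fun i _ => ?_
    rw [inner_sum]
    exact Finset.sum_congr rfl fun k _ => real_inner_smul_right _ _ _
  rw [key]
  have expand : ∀ i k : Fin N, 2 * (A i k * ⟪v i, v k - v i⟫_ℝ) + A i k * ‖v i - v k‖ ^ 2
      = A i k * ‖v k‖ ^ 2 - A i k * ‖v i‖ ^ 2 := by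
    intro i k
    rw [inner_sub_right, norm_sub_sq_real, real_inner_self_eq_norm_sq, real_inner_comm]
    ring
  have hswap := swap_sym_sum A hsym (fun i => ‖v i‖ ^ 2)
  have hzero : 2 * (∑ i, ∑ k, A i k * ⟪v i, v k - v i⟫_ℝ)
      + ∑ i, ∑ k, A i k * ‖v i - v k‖ ^ 2 = 0 := by
    have : 2 * (∑ i, ∑ k, A i k * ⟪v i, v k - v i⟫_ℝ)
        + ∑ i, ∑ k, A i k * ‖v i - v k‖ ^ 2
        = ∑ i, ∑ k, (2 * (A i k * ⟪v i, v k - v i⟫_ℝ) + A i k * ‖v i - v k‖ ^ 2) := by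
      simp only [Finset.sum_add_distrib, Finset.mul_sum]
    rw [this]
    simp only [expand, Finset.sum_sub_distrib]
    rw [← hswap]
    simp
  linarith

lemma dissip_identity (A : Fin N → Fin N → ℝ) (hsym : ∀ i j, A i j = A j i)
    (v : Fin N → EuclideanSpace ℝ (Fin d)) :
    ∑ i, ∑ j, ⟪v i - v j, (∑ k, A i k • (v k - v i)) - ∑ k, A j k • (v k - v j)⟫_ℝ
      = -((N : ℝ) * ∑ i, ∑ k, A i k * ‖v i - v k‖ ^ 2) := by
  rw [sum_expand v (fun i => ∑ k, A i k • (v k - v i)), sum_w_zero A hsym v,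
    inner_zero_right, inner_w_sum A hsym v]
  ring
end dissip

section dissip2
variable {d N : ℕ}

lemma bform_vdot_eq (hN : 0 < N) (A : Fin N → Fin N → ℝ) (hsym : ∀ i j, A i j = A j i)
    (v : Fin N → EuclideanSpace ℝ (Fin d)) :
    bform v (fun i => (N : ℝ)⁻¹ • ∑ k, A i k • (v k - v i))
      = -((2 * (N : ℝ) ^ 2)⁻¹ * ∑ i, ∑ k, A i k * ‖v i - v k‖ ^ 2) := by
  have hN' : (N : ℝ) ≠ 0 := Nat.cast_ne_zero.mpr hN.ne'
  have h1 : ∀ i j : Fin N,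
      ⟪v i - v j, ((N : ℝ)⁻¹ • ∑ k, A i k • (v k - v i)) - (N : ℝ)⁻¹ • ∑ k, A j k • (v k - v j)⟫_ℝ
      = (N : ℝ)⁻¹ * ⟪v i - v j, (∑ k, A i k • (v k - v i)) - ∑ k, A j k • (v k - v j)⟫_ℝ := by
    intro i j
    rw [← smul_sub, real_inner_smul_right]
  rw [bform]
  simp only [h1]
  simp only [← Finset.mul_sum]
  rw [dissip_identity A hsym v]
  field_simp

lemma bform_vdot_le (hN : 0 < N) {α : ℝ} (A : Fin N → Fin N → ℝ)
    (hsym : ∀ i j, A i j = A j i) (hA : ∀ i j, α ≤ A i j)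
    (v : Fin N → EuclideanSpace ℝ (Fin d)) :
    bform v (fun i => (N : ℝ)⁻¹ • ∑ k, A i k • (v k - v i)) ≤ -(α * bform v v) := by
  have hN' : (0:ℝ) < (N:ℝ)^2 := by positivity
  have hnorm : ∑ i, ∑ j, ‖v i - v j‖ ^ 2 = 2 * (N : ℝ) ^ 2 * bform v v := by
    rw [bform, ← mul_assoc, mul_inv_cancel₀ (by positivity), one_mul]
    exact Finset.sum_congr rfl fun i _ => Finset.sum_congr rfl fun j _ =>
      (real_inner_self_eq_norm_sq _).symm
  have hS : α * (2 * (N : ℝ) ^ 2 * bform v v) ≤ ∑ i, ∑ k, A i k * ‖v i - v k‖ ^ 2 := by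
    rw [← hnorm, Finset.mul_sum]
    refine Finset.sum_le_sum fun i _ => ?_
    rw [Finset.mul_sum]
    exact Finset.sum_le_sum fun k _ => mul_le_mul_of_nonneg_right (hA i k) (sq_nonneg _)
  rw [bform_vdot_eq hN A hsym v]
  have h2 : (2 * (N : ℝ) ^ 2)⁻¹ * (α * (2 * (N : ℝ) ^ 2 * bform v v))
      ≤ (2 * (N : ℝ) ^ 2)⁻¹ * ∑ i, ∑ k, A i k * ‖v i - v k‖ ^ 2 :=
    mul_le_mul_of_nonneg_left hS (by positivity)
  have h3 : (2 * (N : ℝ) ^ 2)⁻¹ * (α * (2 * (N : ℝ) ^ 2 * bform v v)) = α * bform v v := by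
    field_simp
  linarith
end dissip2

section deriv
variable {d N : ℕ}

lemma hasDerivAt_bform_self (f : ℝ → Fin N → EuclideanSpace ℝ (Fin d))
    (f' : Fin N → EuclideanSpace ℝ (Fin d)) (t : ℝ)
    (hf : ∀ i, HasDerivAt (fun s => f s i) (f' i) t) :
    HasDerivAt (fun s => bform (f s) (f s)) (2 * bform (f t) f') t := by
  have hder : ∀ i j : Fin N, HasDerivAt (fun s => ⟪f s i - f s j, f s i - f s j⟫_ℝ)
      (2 * ⟪f t i - f t j, f' i - f' j⟫_ℝ) t := by
    intro i j
    have h1 : HasDerivAt (fun s => f s i - f s j) (f' i - f' j) t := (hf i).sub (hf j)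
    have := h1.inner ℝ h1
    have hcomm : ⟪f t i - f t j, f' i - f' j⟫_ℝ + ⟪f' i - f' j, f t i - f t j⟫_ℝ
        = 2 * ⟪f t i - f t j, f' i - f' j⟫_ℝ := by
      rw [real_inner_comm (f' i - f' j)]; ring
    rwa [hcomm] at this
  have hsum : HasDerivAt (fun s => ∑ i, ∑ j, ⟪f s i - f s j, f s i - f s j⟫_ℝ)
      (∑ i, ∑ j, 2 * ⟪f t i - f t j, f' i - f' j⟫_ℝ) t := by
    apply HasDerivAt.fun_sum
    intro i _
    exact HasDerivAt.fun_sum fun j _ => hder i j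
  have := hsum.const_mul ((2 * (N : ℝ) ^ 2)⁻¹)
  have heq : (2 * (N : ℝ) ^ 2)⁻¹ * ∑ i, ∑ j, 2 * ⟪f t i - f t j, f' i - f' j⟫_ℝ
      = 2 * bform (f t) f' := by
    rw [bform]
    simp only [← Finset.mul_sum]
    ring
  rw [heq] at this
  exact this

lemma antitoneOn_Ici_of_hasDerivAt (f g : ℝ → ℝ)
    (hf : ∀ t, 0 ≤ t → HasDerivAt f (g t) t) (h0 : ∀ t, 0 ≤ t → g t ≤ 0) :
    AntitoneOn f (Set.Ici (0:ℝ)) := by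
  apply antitoneOn_of_deriv_nonpos (convex_Ici 0)
  · exact fun t ht => (hf t ht).continuousAt.continuousWithinAt
  · intro t ht
    rw [interior_Ici] at ht
    exact ((hf t (le_of_lt ht)).differentiableAt).differentiableWithinAt
  · intro t ht
    rw [interior_Ici] at ht
    rw [(hf t (le_of_lt ht)).deriv]
    exact h0 t (le_of_lt ht)
end deriv

section phi
open intervalIntegral

lemma Phi_hasDerivAt (g : ℝ → ℝ) (hg : Continuous g) (r0 r : ℝ) :
    HasDerivAt (fun u => ∫ s in r0..u, g s) (g r) r :=
  integral_hasDerivAt_right (hg.intervalIntegrable _ _)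
    (hg.stronglyMeasurableAtFilter _ _) hg.continuousAt

lemma Phi_mono (g : ℝ → ℝ) (hg : Continuous g) (hgpos : ∀ r, 0 ≤ r → 0 ≤ g r) (r0 : ℝ)
    {u w : ℝ} (hu : 0 ≤ u) (huw : u ≤ w) :
    ∫ s in r0..u, g s ≤ ∫ s in r0..w, g s := by
  have hadd : (∫ s in r0..u, g s) + ∫ s in u..w, g s = ∫ s in r0..w, g s :=
    integral_add_adjacent_intervals (hg.intervalIntegrable _ _) (hg.intervalIntegrable _ _)
  have hpos : 0 ≤ ∫ s in u..w, g s :=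
    integral_nonneg huw fun s hs => hgpos s (le_trans hu hs.1)
  linarith

lemma Phi_le_const (g : ℝ → ℝ) (hg : Continuous g) (C r0 b : ℝ) (hr0 : 0 ≤ r0) (hb : r0 ≤ b)
    (hC : ∀ r, 0 ≤ r → g r ≤ C) :
    ∫ s in r0..b, g s ≤ C * (b - r0) := by
  have h1 : ∫ s in r0..b, g s ≤ ∫ s in r0..b, C := by
    apply integral_mono_on hb (hg.intervalIntegrable _ _) (intervalIntegrable_const)
    exact fun s hs => hC s (le_trans hr0 hs.1)
  simpa [mul_comm] using h1

lemma exists_big (g : ℝ → ℝ) (hg : Continuous g) (r0 c c' : ℝ) (hr0 : 0 ≤ r0)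
    (hgpos : ∀ r, 0 ≤ r → 0 ≤ g r) (hcc : c < c') (hc : 0 ≤ c)
    (hint : ENNReal.ofReal c' ≤ ∫⁻ r in Set.Ioi r0, ENNReal.ofReal (g r)) :
    ∃ R, r0 ≤ R ∧ c < ∫ s in r0..R, g s := by
  by_contra h
  push_neg at h
  -- h : ∀ R, r0 ≤ R → ∫ s in r0..R, g s ≤ c
  have key : ∀ n : ℕ, (∫⁻ r in Set.Ioc r0 (r0 + n), ENNReal.ofReal (g r)) ≤ ENNReal.ofReal c := by
    intro n
    have hle : r0 ≤ r0 + n := le_add_of_nonneg_right (Nat.cast_nonneg n)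
    have hInt : IntegrableOn g (Set.Ioc r0 (r0 + n)) := hg.integrableOn_Ioc
    have hnn : 0 ≤ᵐ[MeasureTheory.volume.restrict (Set.Ioc r0 (r0 + n))] g := by
      refine MeasureTheory.ae_restrict_of_forall_mem measurableSet_Ioc fun r hr => ?_
      exact hgpos r (le_trans hr0 hr.1.le)
    have heq : (∫⁻ r in Set.Ioc r0 (r0 + n), ENNReal.ofReal (g r))
        = ENNReal.ofReal (∫ r in Set.Ioc r0 (r0 + n), g r) :=
      (MeasureTheory.ofReal_integral_eq_lintegral_ofReal hInt hnn).symm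
    rw [heq]
    apply ENNReal.ofReal_le_ofReal
    have := h (r0 + n) hle
    rwa [integral_of_le hle] at this
  have hmono : Monotone (fun n : ℕ => Set.Ioc r0 (r0 + n)) := by
    intro n m hnm
    exact Set.Ioc_subset_Ioc le_rfl (by exact_mod_cast add_le_add_right (Nat.cast_le.mpr hnm) r0)
  have hunion : Set.Ioi r0 = ⋃ n : ℕ, Set.Ioc r0 (r0 + n) := by
    ext r
    simp only [Set.mem_Ioi, Set.mem_iUnion, Set.mem_Ioc]
    constructor
    · intro hr
      obtain ⟨n, hn⟩ := exists_nat_ge (r - r0)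
      exact ⟨n, hr, by linarith⟩
    · rintro ⟨n, hn, -⟩
      exact hn
  set ν := MeasureTheory.volume.withDensity (fun r => ENNReal.ofReal (g r)) with hν
  have hmeas : Measurable fun r => ENNReal.ofReal (g r) :=
    (ENNReal.measurable_ofReal.comp hg.measurable)
  have happ : ∀ s : Set ℝ, MeasurableSet s → ν s = ∫⁻ r in s, ENNReal.ofReal (g r) := by
    intro s hs
    rw [hν, MeasureTheory.withDensity_apply _ hs]
  have hlim : Tendsto (fun n : ℕ => ν (Set.Ioc r0 (r0 + n))) atTop (nhds (ν (Set.Ioi r0))) := by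
    rw [hunion]
    exact MeasureTheory.tendsto_measure_iUnion_atTop hmono
  have hub : ν (Set.Ioi r0) ≤ ENNReal.ofReal c := by
    apply le_of_tendsto hlim
    filter_upwards with n
    rw [happ _ measurableSet_Ioc]
    exact key n
  rw [happ _ measurableSet_Ioi] at hub
  have : ENNReal.ofReal c' ≤ ENNReal.ofReal c := le_trans hint hub
  rw [ENNReal.ofReal_le_ofReal_iff hc] at this
  linarith
end phi

lemma csDivHelper (s gg : ℝ) (hs : s ≠ 0) : 1 / (2 * s) * (-(2 * gg * (s * s))) = -(gg * s) := by
  field_simp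

lemma csDivHelper2 (s u : ℝ) (hs : s ≠ 0) : 1 / (2 * s) * (2 * (s * u)) = u := by
  field_simp

set_option maxHeartbeats 1600000 in
/-- **Ha-Ha-Kim.** If `∫_{√X₀}^∞ a(√(2N) r) dr ≥ √V₀`, then the
solution of the Cucker-Smale system with initial datum `(x⁰,v⁰)` tends to consensus. -/
theorem cuckerSmale_consensus_of_initial_condition
    {d N : ℕ} (hN : 0 < N)
    (a : ℝ → ℝ)
    (ha_pos : ∀ r, 0 ≤ r → 0 < a r)
    (ha_mono : ∀ r s, 0 ≤ r → r ≤ s → a s ≤ a r)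
    (ha_bdd : ∃ C, ∀ r, 0 ≤ r → a r ≤ C)
    (ha_lip : ∃ K : NNReal, LipschitzWith K a)
    (x0 v0 : Fin N → EuclideanSpace ℝ (Fin d))
    -- the consensus-region condition ∫_{√X₀}^∞ a(√(2N) r) dr ≥ √V₀
    (hinit : ENNReal.ofReal (Real.sqrt (bform v0 v0)) ≤
      ∫⁻ r in Set.Ioi (Real.sqrt (bform x0 x0)),
        ENNReal.ofReal (a (Real.sqrt (2 * N) * r)))
    (x v : ℝ → Fin N → EuclideanSpace ℝ (Fin d))
    (hx0 : x 0 = x0) (hv0 : v 0 = v0)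
    (hx : ∀ (i : Fin N), ∀ t, 0 ≤ t → HasDerivAt (fun s => x s i) (v t i) t)
    (hv : ∀ (i : Fin N), ∀ t, 0 ≤ t → HasDerivAt (fun s => v s i)
      ((N : ℝ)⁻¹ • ∑ j, a ‖x t i - x t j‖ • (v t j - v t i)) t) :
    ∀ i, Tendsto (fun t => ‖v t i - (N : ℝ)⁻¹ • ∑ j, v t j‖) atTop (nhds 0) := by
  have hN' : (0:ℝ) < N := Nat.cast_pos.mpr hN
  obtain ⟨C, hC⟩ := ha_bdd
  obtain ⟨K, hK⟩ := ha_lip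
  have ha_cont : Continuous a := hK.continuous
  set V : ℝ → ℝ := fun t => bform (v t) (v t) with hVdef
  set X : ℝ → ℝ := fun t => bform (x t) (x t) with hXdef
  set g : ℝ → ℝ := fun r => a (Real.sqrt (2 * (N:ℝ)) * r) with hgdef
  have hg_cont : Continuous g := ha_cont.comp (continuous_const.mul continuous_id)
  have hsqrt2N : (0:ℝ) ≤ Real.sqrt (2 * (N:ℝ)) := Real.sqrt_nonneg _
  have hg_pos : ∀ r, 0 ≤ r → 0 < g r := fun r hr => ha_pos _ (mul_nonneg hsqrt2N hr)
  have hgC : ∀ r, 0 ≤ r → g r ≤ C := fun r hr => hC _ (mul_nonneg hsqrt2N hr)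
  set r0 : ℝ := Real.sqrt (bform x0 x0) with hr0def
  have hr0 : 0 ≤ r0 := Real.sqrt_nonneg _
  set Φ : ℝ → ℝ := fun u => ∫ s in r0..u, g s with hΦdef
  -- derivatives
  set Vd : ℝ → ℝ := fun t => 2 * bform (v t)
    (fun i => (N:ℝ)⁻¹ • ∑ j, a ‖x t i - x t j‖ • (v t j - v t i)) with hVddef
  set Xd : ℝ → ℝ := fun t => 2 * bform (x t) (v t) with hXddef
  have hV' : ∀ t, 0 ≤ t → HasDerivAt V (Vd t) t := fun t ht =>
    hasDerivAt_bform_self v _ t (fun i => hv i t ht)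
  have hX' : ∀ t, 0 ≤ t → HasDerivAt X (Xd t) t := fun t ht =>
    hasDerivAt_bform_self x (v t) t (fun i => hx i t ht)
  have hVnonneg : ∀ t, 0 ≤ V t := fun t => bform_nonneg hN (v t)
  have hXnonneg : ∀ t, 0 ≤ X t := fun t => bform_nonneg hN (x t)
  -- dissipation bound
  have hdiss : ∀ (t : ℝ) (β : ℝ), (∀ i j, β ≤ a ‖x t i - x t j‖) → Vd t ≤ -(2 * β * V t) := by
    intro t β hβ
    have h := bform_vdot_le hN (fun i j => a ‖x t i - x t j‖)
      (fun i j => by rw [norm_sub_rev]) hβ (v t)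
    have : Vd t ≤ 2 * (-(β * V t)) := by
      rw [hVddef]
      exact mul_le_mul_of_nonneg_left h (by norm_num)
    linarith
  have hpair : ∀ (t : ℝ) (i j : Fin N),
      ‖x t i - x t j‖ ≤ Real.sqrt (2 * (N:ℝ)) * Real.sqrt (X t) := by
    intro t i j
    have h1 : ‖x t i - x t j‖ ^ 2 ≤ 2 * (N:ℝ) * X t := pair_le_bform hN (x t) i j
    have h2 : ‖x t i - x t j‖ = Real.sqrt (‖x t i - x t j‖ ^ 2) :=
      (Real.sqrt_sq (norm_nonneg _)).symm
    rw [h2]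
    calc Real.sqrt (‖x t i - x t j‖ ^ 2) ≤ Real.sqrt (2 * (N:ℝ) * X t) := Real.sqrt_le_sqrt h1
      _ = Real.sqrt (2 * (N:ℝ)) * Real.sqrt (X t) := Real.sqrt_mul (by positivity) _
  have hamono' : ∀ (t : ℝ) (R : ℝ), Real.sqrt (X t) ≤ R →
      ∀ i j, a (Real.sqrt (2 * (N:ℝ)) * R) ≤ a ‖x t i - x t j‖ := by
    intro t R hR i j
    exact ha_mono _ _ (norm_nonneg _)
      ((hpair t i j).trans (mul_le_mul_of_nonneg_left hR hsqrt2N))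
  -- V is antitone
  have hVanti : AntitoneOn V (Set.Ici (0:ℝ)) := by
    apply antitoneOn_Ici_of_hasDerivAt V Vd hV'
    intro t ht
    have h1 := hdiss t _ (hamono' t (Real.sqrt (X t)) le_rfl)
    have h2 : 0 < a (Real.sqrt (2 * (N:ℝ)) * Real.sqrt (X t)) :=
      ha_pos _ (mul_nonneg hsqrt2N (Real.sqrt_nonneg _))
    nlinarith [hVnonneg t]
  set W : ℝ → ℝ := fun t => V (max t 0) with hWdef
  have hWanti : Antitone W := fun s t hst =>
    hVanti (Set.mem_Ici.mpr (le_max_right s 0)) (Set.mem_Ici.mpr (le_max_right t 0))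
      (max_le_max hst le_rfl)
  have hWbdd : BddBelow (Set.range W) := by
    refine ⟨0, ?_⟩
    rintro y ⟨t, rfl⟩
    exact hVnonneg _
  set m : ℝ := ⨅ t, W t with hmdef
  have hWlim : Tendsto W atTop (nhds m) := tendsto_atTop_ciInf hWanti hWbdd
  have hm0 : 0 ≤ m := le_ciInf fun t => hVnonneg _
  have hmle : ∀ t, 0 ≤ t → m ≤ V t := by
    intro t ht
    have h := ciInf_le hWbdd t
    simpa [hWdef, max_eq_left ht] using h
  -- main claim : m = 0
  have hmzero : m = 0 := by
    by_contra hm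
    have hmpos : 0 < m := lt_of_le_of_ne hm0 (Ne.symm hm)
    have hCpos : 0 < C := lt_of_lt_of_le (ha_pos 0 le_rfl) (hC 0 le_rfl)
    set ε : ℝ := Real.sqrt m / (2 * C) with hεdef
    have hεpos : 0 < ε := by
      apply div_pos (Real.sqrt_pos.mpr hmpos)
      positivity
    have hX0 : X 0 = bform x0 x0 := by rw [hXdef]; simp [hx0]
    have hV0 : V 0 = bform v0 v0 := by rw [hVdef]; simp [hv0]
    have hr0X : r0 = Real.sqrt (X 0) := by rw [hr0def, hX0]
    set b0 : ℝ := Real.sqrt (X 0 + ε ^ 2) with hb0def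
    have hb0 : r0 ≤ b0 := by
      rw [hr0X, hb0def]
      exact Real.sqrt_le_sqrt (by nlinarith)
    have hb0ε : b0 - r0 ≤ ε := by
      have hsq : X 0 + ε ^ 2 ≤ (r0 + ε) ^ 2 := by
        have : r0 ^ 2 = X 0 := by rw [hr0X]; exact Real.sq_sqrt (hXnonneg 0)
        nlinarith
      have : b0 ≤ r0 + ε := by
        rw [hb0def]
        calc Real.sqrt (X 0 + ε ^ 2) ≤ Real.sqrt ((r0 + ε) ^ 2) := Real.sqrt_le_sqrt hsq
          _ = r0 + ε := Real.sqrt_sq (by positivity)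
      linarith
    have hΦb0 : Φ b0 ≤ Real.sqrt m / 2 := by
      have h1 : Φ b0 ≤ C * (b0 - r0) := Phi_le_const g hg_cont C r0 b0 hr0 hb0 hgC
      have h2 : C * (b0 - r0) ≤ C * ε := mul_le_mul_of_nonneg_left hb0ε hCpos.le
      have h3 : C * ε = Real.sqrt m / 2 := by
        rw [hεdef]; field_simp
      linarith
    -- Lyapunov functional
    set L : ℝ → ℝ := fun t => Real.sqrt (V t) + Φ (Real.sqrt (X t + ε ^ 2)) with hLdef
    set Ld : ℝ → ℝ := fun t => 1 / (2 * Real.sqrt (V t)) * Vd t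
      + g (Real.sqrt (X t + ε ^ 2)) * (1 / (2 * Real.sqrt (X t + ε ^ 2)) * Xd t) with hLddef
    have hL' : ∀ t, 0 ≤ t → HasDerivAt L (Ld t) t := by
      intro t ht
      have hVt : V t ≠ 0 := ne_of_gt (lt_of_lt_of_le hmpos (hmle t ht))
      have h1 : HasDerivAt (fun s => Real.sqrt (V s)) (1 / (2 * Real.sqrt (V t)) * Vd t) t :=
        (Real.hasDerivAt_sqrt hVt).comp t (hV' t ht)
      have hXe : HasDerivAt (fun s => X s + ε ^ 2) (Xd t) t := (hX' t ht).add_const _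
      have hXepos : X t + ε ^ 2 ≠ 0 := by nlinarith [hXnonneg t, hεpos]
      have h2a : HasDerivAt (fun s => Real.sqrt (X s + ε ^ 2))
          (1 / (2 * Real.sqrt (X t + ε ^ 2)) * Xd t) t :=
        (Real.hasDerivAt_sqrt hXepos).comp t hXe
      have h2 : HasDerivAt (fun s => Φ (Real.sqrt (X s + ε ^ 2)))
          (g (Real.sqrt (X t + ε ^ 2)) * (1 / (2 * Real.sqrt (X t + ε ^ 2)) * Xd t)) t :=
        (Phi_hasDerivAt g hg_cont r0 _).comp t h2a
      exact h1.add h2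
    have hLd : ∀ t, 0 ≤ t → Ld t ≤ 0 := by
      intro t ht
      have hVt : 0 < V t := lt_of_lt_of_le hmpos (hmle t ht)
      have hs1 : 0 < Real.sqrt (V t) := Real.sqrt_pos.mpr hVt
      have hs2 : 0 < Real.sqrt (X t + ε ^ 2) := Real.sqrt_pos.mpr (by nlinarith [hXnonneg t, hεpos])
      have hgnn : 0 ≤ g (Real.sqrt (X t + ε ^ 2)) := (hg_pos _ hs2.le).le
      have hsqX : Real.sqrt (X t) ≤ Real.sqrt (X t + ε ^ 2) := Real.sqrt_le_sqrt (by nlinarith)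
      have hVle : Vd t ≤ -(2 * g (Real.sqrt (X t + ε ^ 2)) * V t) :=
        hdiss t _ (hamono' t (Real.sqrt (X t + ε ^ 2)) hsqX)
      have hXdle : Xd t ≤ 2 * (Real.sqrt (X t + ε ^ 2) * Real.sqrt (V t)) := by
        have hcs := bform_cauchySchwarz hN (x t) (v t)
        have h1 : Xd t ≤ 2 * (Real.sqrt (X t) * Real.sqrt (V t)) := by
          rw [hXddef]; dsimp only; linarith
        have h2 : Real.sqrt (X t) * Real.sqrt (V t)
            ≤ Real.sqrt (X t + ε ^ 2) * Real.sqrt (V t) :=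
          mul_le_mul_of_nonneg_right hsqX hs1.le
        linarith
      have t1 : 1 / (2 * Real.sqrt (V t)) * Vd t
          ≤ -(g (Real.sqrt (X t + ε ^ 2)) * Real.sqrt (V t)) := by
        have hv2 : Real.sqrt (V t) * Real.sqrt (V t) = V t := Real.mul_self_sqrt hVt.le
        have hVle' : Vd t
            ≤ -(2 * g (Real.sqrt (X t + ε ^ 2)) * (Real.sqrt (V t) * Real.sqrt (V t))) := by
          rw [hv2]; exact hVle
        have hmul := mul_le_mul_of_nonneg_left hVle' (by positivity :
          (0:ℝ) ≤ 1 / (2 * Real.sqrt (V t)))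
        have heq := csDivHelper (Real.sqrt (V t)) (g (Real.sqrt (X t + ε ^ 2))) hs1.ne'
        linarith
      have t2 : g (Real.sqrt (X t + ε ^ 2)) * (1 / (2 * Real.sqrt (X t + ε ^ 2)) * Xd t)
          ≤ g (Real.sqrt (X t + ε ^ 2)) * Real.sqrt (V t) := by
        apply mul_le_mul_of_nonneg_left _ hgnn
        have hmul := mul_le_mul_of_nonneg_left hXdle (by positivity :
          (0:ℝ) ≤ 1 / (2 * Real.sqrt (X t + ε ^ 2)))
        have heq := csDivHelper2 (Real.sqrt (X t + ε ^ 2)) (Real.sqrt (V t)) hs2.ne'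
        linarith
      rw [hLddef]
      dsimp only
      linarith
    have hLanti : AntitoneOn L (Set.Ici (0:ℝ)) := antitoneOn_Ici_of_hasDerivAt L Ld hL' hLd
    have hLle : ∀ t, 0 ≤ t → L t ≤ L 0 :=
      fun t ht => hLanti (Set.mem_Ici.mpr le_rfl) (Set.mem_Ici.mpr ht) ht
    have hL0 : L 0 ≤ Real.sqrt (bform v0 v0) + Real.sqrt m / 2 := by
      rw [hLdef]
      dsimp only
      rw [hV0]
      have : Φ (Real.sqrt (X 0 + ε ^ 2)) = Φ b0 := by rw [hb0def]
      rw [this]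
      linarith
    have hΦle : ∀ t, 0 ≤ t → Φ (Real.sqrt (X t + ε ^ 2))
        ≤ Real.sqrt (bform v0 v0) - Real.sqrt m / 2 := by
      intro t ht
      have h1 : Real.sqrt m ≤ Real.sqrt (V t) := Real.sqrt_le_sqrt (hmle t ht)
      have h2 := hLle t ht
      rw [hLdef] at h2
      dsimp only at h2
      linarith [hL0]
    set c' : ℝ := Real.sqrt (bform v0 v0) with hc'def
    set c : ℝ := c' - Real.sqrt m / 2 with hcdef
    have hmc' : Real.sqrt m ≤ c' := by
      rw [hc'def, ← hV0]
      exact Real.sqrt_le_sqrt (hmle 0 le_rfl)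
    have hsqrtm : 0 < Real.sqrt m := Real.sqrt_pos.mpr hmpos
    have hcnn : 0 ≤ c := by rw [hcdef]; linarith
    have hcc : c < c' := by rw [hcdef]; linarith
    obtain ⟨R, hRr0, hRbig⟩ := exists_big g hg_cont r0 c c' hr0
      (fun r hr => (hg_pos r hr).le) hcc hcnn hinit
    have hRnonneg : 0 ≤ R := hr0.trans hRr0
    have hXle : ∀ t, 0 ≤ t → Real.sqrt (X t) ≤ R := by
      intro t ht
      by_contra hcon
      push_neg at hcon
      have hle : R ≤ Real.sqrt (X t + ε ^ 2) := by
        have : Real.sqrt (X t) ≤ Real.sqrt (X t + ε ^ 2) := Real.sqrt_le_sqrt (by nlinarith)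
        linarith
      have h1 : Φ R ≤ Φ (Real.sqrt (X t + ε ^ 2)) :=
        Phi_mono g hg_cont (fun r hr => (hg_pos r hr).le) r0 hRnonneg hle
      have h2 := hΦle t ht
      simp only [hΦdef] at h1 h2
      linarith [hRbig]
    set α : ℝ := a (Real.sqrt (2 * (N:ℝ)) * R) with hαdef
    have hαpos : 0 < α := ha_pos _ (mul_nonneg hsqrt2N hRnonneg)
    have hVd2 : ∀ t, 0 ≤ t → Vd t ≤ -(2 * α * m) := by
      intro t ht
      have h1 : Vd t ≤ -(2 * α * V t) := hdiss t α (hamono' t R (hXle t ht))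
      have h2 := mul_le_mul_of_nonneg_left (hmle t ht) (by positivity : (0:ℝ) ≤ 2 * α)
      linarith
    set h : ℝ → ℝ := fun t => V t + 2 * α * m * t with hhdef
    have hh' : ∀ t, 0 ≤ t → HasDerivAt h (Vd t + 2 * α * m) t := by
      intro t ht
      have h2 : HasDerivAt (fun s => 2 * α * m * s) (2 * α * m) t := by
        simpa using (hasDerivAt_id t).const_mul (2 * α * m)
      exact (hV' t ht).add h2
    have hhanti : AntitoneOn h (Set.Ici (0:ℝ)) :=
      antitoneOn_Ici_of_hasDerivAt h (fun t => Vd t + 2 * α * m) hh'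
        (fun t ht => by have := hVd2 t ht; linarith)
    set T : ℝ := V 0 / (2 * α * m) + 1 with hTdef
    have hT : 0 ≤ T := by
      rw [hTdef]
      have : 0 ≤ V 0 / (2 * α * m) := div_nonneg (hVnonneg 0) (by positivity)
      linarith
    have hhT : h T ≤ h 0 := hhanti (Set.mem_Ici.mpr le_rfl) (Set.mem_Ici.mpr hT) hT
    have hTeq : 2 * α * m * T = V 0 + 2 * α * m := by
      rw [hTdef]
      field_simp
    rw [hhdef] at hhT
    dsimp only at hhT
    rw [hTeq] at hhT
    nlinarith [hVnonneg T]
  -- conclusion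
  have hVlim : Tendsto V atTop (nhds 0) := by
    have heq : W =ᶠ[atTop] V := by
      filter_upwards [eventually_ge_atTop (0:ℝ)] with t ht
      rw [hWdef]
      simp [max_eq_left ht]
    rw [hmzero] at hWlim
    exact hWlim.congr' heq
  intro i
  have hbound : ∀ t, ‖v t i - (N:ℝ)⁻¹ • ∑ j, v t j‖ ≤ Real.sqrt ((N:ℝ) * V t) := by
    intro t
    have h1 : ‖v t i - (N:ℝ)⁻¹ • ∑ j, v t j‖ ^ 2 ≤ (N:ℝ) * V t := single_le_bform hN (v t) i
    have h2 := Real.sqrt_le_sqrt h1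
    rwa [Real.sqrt_sq (norm_nonneg _)] at h2
  have hlim2 : Tendsto (fun t => Real.sqrt ((N:ℝ) * V t)) atTop (nhds 0) := by
    have h1 : Tendsto (fun t => (N:ℝ) * V t) atTop (nhds ((N:ℝ) * 0)) := hVlim.const_mul _
    rw [mul_zero] at h1
    have h2 := (Real.continuous_sqrt.tendsto 0).comp h1
    rw [Real.sqrt_zero] at h2
    exact h2
  exact tendsto_of_tendsto_of_tendsto_of_le_of_le tendsto_const_nhds hlim2
    (fun t => norm_nonneg _) hbound
end

section
/- Consider the planar ODE system ẋ(t) = v(t), v̇(t) = −v(t)/(1 + x(t)²) on [0,∞) with initial condition x(0) = x^0 > 0, v(0) = v^0 > 0 (arising as the relative state of two Cucker-Smale agents on the line with kernel a(r) = 1/(2(1+r²))). Every solution satisfies v(t) − v^0 = −arctan x(t) + arctan x^0 for all t ≥ 0. Consequently, if arctan x^0 + v^0 > π/2, then there exists ε > 0 with |v(t)| > ε for all t ≥ 0; in particular v(t) does not converge to 0, so the two-agent system does not converge to consensus. -/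
open Filter

/-- For the relative dynamics `ẋ = v`, `v̇ = -v/(1+x²)` of two
Cucker-Smale agents on the line with `x(0) = x⁰ > 0`, `v(0) = v⁰ > 0`, one has
`v(t) - v⁰ = -arctan x(t) + arctan x⁰` for all `t ≥ 0`; consequently, if
`arctan x⁰ + v⁰ > π/2`, then `|v(t)|` stays above a positive constant, so `v` does
not tend to `0` (no consensus). -/
theorem cuckerSmale_two_agents_no_consensus
    (x v : ℝ → ℝ) (x0 v0 : ℝ) (hx0pos : 0 < x0) (hv0pos : 0 < v0)
    (hx0 : x 0 = x0) (hv0 : v 0 = v0)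
    (hx : ∀ t, 0 ≤ t → HasDerivAt x (v t) t)
    (hv : ∀ t, 0 ≤ t → HasDerivAt v (-(v t) / (1 + (x t) ^ 2)) t) :
    (∀ t, 0 ≤ t → v t - v0 = -Real.arctan (x t) + Real.arctan x0) ∧
    (Real.arctan x0 + v0 > Real.pi / 2 →
      (∃ ε > 0, ∀ t, 0 ≤ t → ε < |v t|) ∧
      ¬ Tendsto v atTop (nhds 0)) := by
  set E : ℝ → ℝ := fun t => v t + Real.arctan (x t) with hE
  have hEderiv : ∀ t, 0 ≤ t → HasDerivAt E 0 t := by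
    intro t ht
    have h1 : HasDerivAt (fun s => Real.arctan (x s)) (1 / (1 + (x t) ^ 2) * v t) t :=
      (Real.hasDerivAt_arctan (x t)).comp t (hx t ht)
    have h2 := (hv t ht).add h1
    have hpos : (0:ℝ) < 1 + (x t) ^ 2 := by positivity
    have : -(v t) / (1 + (x t) ^ 2) + 1 / (1 + (x t) ^ 2) * v t = 0 := by
      field_simp
      ring
    rwa [this] at h2
  have hconst : ∀ t, 0 ≤ t → E t = E 0 := by
    intro t ht
    have hcont : ContinuousOn E (Set.Icc 0 t) := fun s hs =>
      ((hEderiv s hs.1).continuousAt).continuousWithinAt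
    have hd : ∀ s ∈ Set.Ico 0 t, HasDerivWithinAt E 0 (Set.Ici s) s := fun s hs =>
      (hEderiv s hs.1).hasDerivWithinAt
    exact constant_of_has_deriv_right_zero hcont hd t (Set.mem_Icc.mpr ⟨ht, le_refl t⟩)
  have key : ∀ t, 0 ≤ t → v t - v0 = -Real.arctan (x t) + Real.arctan x0 := by
    intro t ht
    have := hconst t ht
    simp only [hE, hx0, hv0] at this
    linarith
  refine ⟨key, fun hgt => ?_⟩
  set ε := (Real.arctan x0 + v0 - Real.pi / 2) / 2 with hε
  have hεpos : 0 < ε := by simp [hε]; linarith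
  have hlb : ∀ t, 0 ≤ t → ε < |v t| := by
    intro t ht
    have h1 := key t ht
    have h2 : Real.arctan (x t) < Real.pi / 2 := Real.arctan_lt_pi_div_two _
    have : ε < v t := by simp only [hε]; linarith
    exact this.trans_le (le_abs_self _)
  refine ⟨⟨ε, hεpos, hlb⟩, fun htend => ?_⟩
  obtain ⟨t, ht, hlt⟩ := (htend.eventually (eventually_abs_sub_lt 0 hεpos)).and
    (eventually_ge_atTop (0:ℝ)) |>.exists
  rw [sub_zero] at ht
  exact absurd ht (not_lt.mpr (hlb t hlt).le)
end

section
/- Let (x,v) be a solution of the perturbed Cucker-Smale system ẋ_i = v_i, v̇_i = (1/N) Σ_{j=1}^N a(‖x_i − x_j‖)(v_j − v_i) + α(t)(v̄ − v_i) + β(t) Δ_i(t) with β(t) > 0 and min α(t) > 0. If there exists T ≥ 0 such that Δ_i^⊥(t) = Δ_i(t) − (1/N) Σ_{j=1}^N Δ_j(t) = 0 for every t ≥ T and every i = 1,...,N, then (x,v) tends to consensus. In particular, if all agents are subject to the same deviation, Δ_i(t) = Δ(t) for all i and all t, the system tends to consensus. -/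
open scoped BigOperators InnerProductSpace
open MeasureTheory Filter

/-- The mean of `N` vectors. -/
noncomputable def meanVec {d N : ℕ} (v : Fin N → EuclideanSpace ℝ (Fin d)) :
    EuclideanSpace ℝ (Fin d) :=
  (N : ℝ)⁻¹ • ∑ i, v i

lemma sym_sum_nonpos {d N : ℕ} (A : Fin N → Fin N → ℝ)
    (hsym : ∀ i j, A i j = A j i) (hpos : ∀ i j, 0 ≤ A i j)
    (w : Fin N → EuclideanSpace ℝ (Fin d)) :
    ∑ i, ∑ j, A i j * ⟪w i, w j - w i⟫_ℝ ≤ 0 := by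
  set S := ∑ i, ∑ j, A i j * ⟪w i, w j - w i⟫_ℝ with hS
  have hswap : S = ∑ i, ∑ j, A i j * ⟪w j, w i - w j⟫_ℝ := by
    rw [hS, Finset.sum_comm]
    refine Finset.sum_congr rfl fun j _ => Finset.sum_congr rfl fun i _ => ?_
    rw [hsym i j]
  have h2 : S + S = ∑ i, ∑ j, A i j * (-(‖w i - w j‖ ^ 2)) := by
    nth_rewrite 2 [hswap]
    rw [← Finset.sum_add_distrib]
    refine Finset.sum_congr rfl fun i _ => ?_
    rw [← Finset.sum_add_distrib]
    refine Finset.sum_congr rfl fun j _ => ?_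
    rw [← mul_add]
    congr 1
    have hn : ‖w i - w j‖ ^ 2 = ⟪w i - w j, w i - w j⟫_ℝ := (real_inner_self_eq_norm_sq _).symm
    have hc : ⟪w j, w i⟫_ℝ = ⟪w i, w j⟫_ℝ := real_inner_comm _ _
    simp only [inner_sub_left, inner_sub_right] at *
    linarith
  have hle : S + S ≤ 0 := by
    rw [h2]
    apply Finset.sum_nonpos; intro i _
    apply Finset.sum_nonpos; intro j _
    apply mul_nonpos_of_nonneg_of_nonpos (hpos i j)
    simp only [neg_nonpos]
    positivity
  linarith


/-- If after some time `T ≥ 0` the perturbations have no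
orthogonal component (`Δᵢ^⊥ ≡ 0`), then the perturbed Cucker-Smale system tends
to consensus.  In particular this holds when all agents are subject to the same
deviation `Δᵢ(t) = Δ(t)`. -/
theorem perturbedCuckerSmale_consensus_of_no_perp_perturbation
    {d N : ℕ} (hN : 0 < N)
    (a : ℝ → ℝ)
    (ha_pos : ∀ r, 0 ≤ r → 0 < a r)
    (ha_mono : ∀ r s, 0 ≤ r → r ≤ s → a s ≤ a r)
    (ha_bdd : ∃ C, ∀ r, 0 ≤ r → a r ≤ C)
    (ha_lip : ∃ K : NNReal, LipschitzWith K a)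
    (α β : ℝ → ℝ)
    (hβ : ∀ t, 0 ≤ t → 0 < β t)
    (αmin : ℝ) (hαmin_pos : 0 < αmin) (hαmin : ∀ t, 0 ≤ t → αmin ≤ α t)
    (hα : ∀ t, 0 ≤ t → 0 ≤ α t)
    (Δ : Fin N → ℝ → EuclideanSpace ℝ (Fin d))
    (x v : ℝ → Fin N → EuclideanSpace ℝ (Fin d))
    (hx : ∀ (i : Fin N), ∀ t, 0 ≤ t → HasDerivAt (fun s => x s i) (v t i) t)
    (hv : ∀ (i : Fin N), ∀ t, 0 ≤ t → HasDerivAt (fun s => v s i)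
      ((N : ℝ)⁻¹ • ∑ j, a ‖x t i - x t j‖ • (v t j - v t i)
        + α t • (meanVec (v t) - v t i) + β t • Δ i t) t)
    -- either the orthogonal components of the deviations vanish after some time `T`,
    -- or (in particular) all agents are subject to the same deviation
    (hΔ : (∃ T, 0 ≤ T ∧ ∀ t, T ≤ t → ∀ i, Δ i t - meanVec (fun j => Δ j t) = 0) ∨
      (∃ D : ℝ → EuclideanSpace ℝ (Fin d), ∀ (i : Fin N), ∀ t, 0 ≤ t → Δ i t = D t)) :
    ∀ i, Tendsto (fun t => ‖v t i - meanVec (v t)‖) atTop (nhds 0) := by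
  classical
  obtain ⟨T, hT0, hTeq⟩ : ∃ T, 0 ≤ T ∧ ∀ t, T ≤ t →
      ∃ u : EuclideanSpace ℝ (Fin d), ∀ i, Δ i t = u := by
    rcases hΔ with ⟨T, hT0, h⟩ | ⟨D0, h⟩
    · exact ⟨T, hT0, fun t ht => ⟨meanVec (fun j => Δ j t), fun i => sub_eq_zero.mp (h t ht i)⟩⟩
    · exact ⟨0, le_refl 0, fun t ht => ⟨D0 t, fun i => h i t ht⟩⟩
  have hNR : (0:ℝ) < (N:ℝ) := by exact_mod_cast hN
  set w : ℝ → Fin N → EuclideanSpace ℝ (Fin d) := fun t i => v t i - meanVec (v t) with hwdef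
  set f : Fin N → ℝ → EuclideanSpace ℝ (Fin d) := fun i t =>
    (N : ℝ)⁻¹ • ∑ j, a ‖x t i - x t j‖ • (v t j - v t i)
      + α t • (meanVec (v t) - v t i) + β t • Δ i t with hfdef
  have hsumw : ∀ t, ∑ i, w t i = 0 := by
    intro t
    have h1 : ∑ _i : Fin N, meanVec (v t) = (N:ℝ) • meanVec (v t) := by
      rw [Finset.sum_const, Finset.card_univ, Fintype.card_fin]
      exact (Nat.cast_smul_eq_nsmul ℝ N _).symm
    simp only [hwdef]
    rw [Finset.sum_sub_distrib, h1, meanVec, smul_smul, mul_inv_cancel₀ hNR.ne', one_smul,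
      sub_self]
  have hmean : ∀ t, 0 ≤ t →
      HasDerivAt (fun s => meanVec (v s)) (meanVec (fun j => f j t)) t := by
    intro t ht
    have hs : HasDerivAt (fun s => ∑ j, v s j) (∑ j, f j t) t :=
      HasDerivAt.fun_sum (fun j _ => hv j t ht)
    exact hs.const_smul ((N:ℝ)⁻¹)
  have hw' : ∀ (i : Fin N) t, 0 ≤ t →
      HasDerivAt (fun s => w s i) (f i t - meanVec (fun j => f j t)) t :=
    fun i t ht => (hv i t ht).sub (hmean t ht)
  set W : ℝ → ℝ := fun t => ∑ i, ⟪w t i, w t i⟫_ℝ with hWdef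
  have hWnn : ∀ t, 0 ≤ W t :=
    fun t => Finset.sum_nonneg fun i _ => real_inner_self_nonneg
  set Dr : ℝ → ℝ := fun t => ∑ i,
    (⟪w t i, f i t - meanVec (fun j => f j t)⟫_ℝ
      + ⟪f i t - meanVec (fun j => f j t), w t i⟫_ℝ) with hDrdef
  have hW' : ∀ t, 0 ≤ t → HasDerivAt W (Dr t) t :=
    fun t ht => HasDerivAt.fun_sum (fun i _ => (hw' i t ht).inner ℝ (hw' i t ht))
  -- key differential inequality
  have key : ∀ t, T ≤ t → Dr t ≤ -(2*αmin) * W t := by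
    intro t ht
    have ht0 : 0 ≤ t := le_trans hT0 ht
    obtain ⟨u, hu⟩ := hTeq t ht
    have hvw : ∀ j i : Fin N, v t j - v t i = w t j - w t i := by
      intro j i; simp only [hwdef]; rw [sub_sub_sub_cancel_right]
    have e3 : ∀ i, ⟪w t i, f i t⟫_ℝ =
        (N:ℝ)⁻¹ * (∑ j, a ‖x t i - x t j‖ * ⟪w t i, w t j - w t i⟫_ℝ)
          + (-(α t) * ⟪w t i, w t i⟫_ℝ) + β t * ⟪w t i, u⟫_ℝ := by
      intro i
      have hm : meanVec (v t) - v t i = -(w t i) := by simp only [hwdef]; abel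
      simp only [hfdef]
      rw [inner_add_right, inner_add_right, real_inner_smul_right, real_inner_smul_right,
        real_inner_smul_right, inner_sum, hm, inner_neg_right, hu i]
      rw [show (∑ j, ⟪w t i, a ‖x t i - x t j‖ • (v t j - v t i)⟫_ℝ)
            = ∑ j, a ‖x t i - x t j‖ * ⟪w t i, w t j - w t i⟫_ℝ from
          Finset.sum_congr rfl fun j _ => by rw [real_inner_smul_right, hvw j i]]
      ring
    have e2 : ∑ i, ⟪w t i, f i t - meanVec (fun j => f j t)⟫_ℝ
        = ∑ i, ⟪w t i, f i t⟫_ℝ := by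
      simp only [inner_sub_right]
      rw [Finset.sum_sub_distrib, ← sum_inner, hsumw t, inner_zero_left, sub_zero]
    have e1 : Dr t = 2 * ∑ i, ⟪w t i, f i t - meanVec (fun j => f j t)⟫_ℝ := by
      simp only [hDrdef]
      rw [Finset.mul_sum]
      refine Finset.sum_congr rfl fun i _ => ?_
      rw [real_inner_comm (f i t - meanVec (fun j => f j t)) (w t i)]
      ring
    have hA : ∑ i, (N:ℝ)⁻¹ * (∑ j, a ‖x t i - x t j‖ * ⟪w t i, w t j - w t i⟫_ℝ) ≤ 0 := by
      rw [← Finset.mul_sum]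
      apply mul_nonpos_of_nonneg_of_nonpos (inv_nonneg.mpr hNR.le)
      refine sym_sum_nonpos (fun i j => a ‖x t i - x t j‖) ?_ ?_ (w t)
      · intro i j; show a ‖x t i - x t j‖ = a ‖x t j - x t i‖; rw [norm_sub_rev]
      · intro i j; exact (ha_pos _ (norm_nonneg _)).le
    have hC : ∑ i, β t * ⟪w t i, u⟫_ℝ = 0 := by
      rw [← Finset.mul_sum, ← sum_inner, hsumw t, inner_zero_left, mul_zero]
    have hB : ∑ i, (-(α t) * ⟪w t i, w t i⟫_ℝ) = -(α t) * W t := by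
      rw [← Finset.mul_sum]
    have hsum : ∑ i, ⟪w t i, f i t⟫_ℝ ≤ -(αmin) * W t := by
      rw [Finset.sum_congr rfl (fun i _ => e3 i), Finset.sum_add_distrib,
        Finset.sum_add_distrib, hB, hC]
      have hαW : -(α t) * W t ≤ -(αmin) * W t :=
        mul_le_mul_of_nonneg_right (neg_le_neg (hαmin t ht0)) (hWnn t)
      linarith
    rw [e1, e2]
    linarith
  -- Gronwall
  set c : ℝ := 2*αmin with hc
  have hcpos : 0 < c := by simp only [hc]; linarith
  set g : ℝ → ℝ := fun t => W t * Real.exp (c*t) with hgdef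
  have hg' : ∀ t, 0 ≤ t →
      HasDerivAt g (Dr t * Real.exp (c*t) + W t * (Real.exp (c*t) * (c*1))) t :=
    fun t ht => (hW' t ht).mul (((hasDerivAt_id t).const_mul c).exp)
  have hanti : AntitoneOn g (Set.Ici T) := by
    apply antitoneOn_of_deriv_nonpos (convex_Ici T)
    · intro t ht
      exact ((hg' t (hT0.trans ht)).continuousAt).continuousWithinAt
    · intro t ht
      rw [interior_Ici] at ht
      exact ((hg' t (hT0.trans (le_of_lt ht))).differentiableAt).differentiableWithinAt
    · intro t ht
      rw [interior_Ici] at ht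
      rw [(hg' t (hT0.trans (le_of_lt ht))).deriv]
      have hE := Real.exp_pos (c*t)
      have hk := key t (le_of_lt ht)
      nlinarith [hWnn t]
  have hbound : ∀ t, T ≤ t → W t ≤ (W T * Real.exp (c*T)) * Real.exp (-(c*t)) := by
    intro t ht
    have h := hanti Set.self_mem_Ici ht ht
    have hE := Real.exp_pos (c*t)
    rw [Real.exp_neg, ← div_eq_mul_inv, le_div_iff₀ hE]
    exact h
  have hzero : Tendsto W atTop (nhds 0) := by
    have h1 : Tendsto (fun t : ℝ => -(c*t)) atTop atBot := by
      have h0 : Tendsto (fun t : ℝ => c*t) atTop atTop :=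
        Tendsto.const_mul_atTop hcpos tendsto_id
      exact tendsto_neg_atBot_iff.mpr h0
    have h2 : Tendsto (fun t : ℝ => Real.exp (-(c*t))) atTop (nhds 0) :=
      Real.tendsto_exp_atBot.comp h1
    have hlim : Tendsto (fun t => (W T * Real.exp (c*T)) * Real.exp (-(c*t)))
        atTop (nhds 0) := by
      have := h2.const_mul (W T * Real.exp (c*T))
      simpa using this
    apply tendsto_of_tendsto_of_tendsto_of_le_of_le' tendsto_const_nhds hlim
    · exact Eventually.of_forall hWnn
    · filter_upwards [eventually_ge_atTop T] with t ht using hbound t ht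
  intro i
  have hsq : Tendsto (fun t => ⟪w t i, w t i⟫_ℝ) atTop (nhds 0) := by
    apply tendsto_of_tendsto_of_tendsto_of_le_of_le' tendsto_const_nhds hzero
    · exact Eventually.of_forall (fun t => real_inner_self_nonneg)
    · refine Eventually.of_forall (fun t => ?_)
      exact Finset.single_le_sum (fun j _ => real_inner_self_nonneg) (Finset.mem_univ i)
  have hsqrt : Tendsto (fun t => Real.sqrt ⟪w t i, w t i⟫_ℝ) atTop (nhds 0) := by
    have := (Real.continuous_sqrt.continuousAt (x := (0:ℝ))).tendsto.comp hsq
    simpa [Function.comp_def, Real.sqrt_sq, norm_nonneg] using this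
  have heq : (fun t => Real.sqrt ⟪w t i, w t i⟫_ℝ) = fun t => ‖v t i - meanVec (v t)‖ := by
    funext t
    rw [real_inner_self_eq_norm_sq, Real.sqrt_sq (norm_nonneg _)]
  rwa [heq] at hsqrt
end

section
/- Let (x,v) be a solution of the perturbed Cucker-Smale system ẋ_i = v_i, v̇_i = (1/N) Σ_{j=1}^N a(‖x_i − x_j‖)(v_j − v_i) + α(t)(v̄ − v_i) + β(t) Δ_i(t) with β(t) > 0. For every i = 1,...,N let ε_i : [0,∞) → [0,ℓ] with ℓ < (min_{t≥0} α(t)) / (max_{t≥0} β(t)). If there exists T ≥ 0 such that ‖Δ_i(t)‖ ≤ ε_i(t) ‖v_i^⊥(t)‖ for every t ≥ T and every i = 1,...,N, then (x,v) tends to consensus. -/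
open scoped BigOperators InnerProductSpace
open MeasureTheory Filter

set_option maxHeartbeats 1000000

/-- Symmetric sum nonpositivity. -/
lemma csAux_sym_sum_nonpos {E : Type*} [NormedAddCommGroup E] [InnerProductSpace ℝ E]
    {N : ℕ} (b : Fin N → Fin N → ℝ) (hb_sym : ∀ i j, b i j = b j i)
    (hb : ∀ i j, 0 ≤ b i j) (w : Fin N → E) :
    ∑ i, ∑ j, b i j * ⟪w i, w j - w i⟫_ℝ ≤ 0 := by
  have hswap : ∑ i, ∑ j, b i j * ⟪w i, w j - w i⟫_ℝ
      = ∑ i, ∑ j, b i j * ⟪w j, w i - w j⟫_ℝ := by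
    rw [Finset.sum_comm]
    refine Finset.sum_congr rfl fun i _ => Finset.sum_congr rfl fun j _ => ?_
    rw [hb_sym i j]
  have key : (2:ℝ) * ∑ i, ∑ j, b i j * ⟪w i, w j - w i⟫_ℝ
      = ∑ i, ∑ j, b i j * (-‖w i - w j‖^2) := by
    rw [two_mul]
    nth_rewrite 2 [hswap]
    rw [← Finset.sum_add_distrib]
    refine Finset.sum_congr rfl fun i _ => ?_
    rw [← Finset.sum_add_distrib]
    refine Finset.sum_congr rfl fun j _ => ?_
    rw [← mul_add]
    congr 1
    have : ⟪w i, w j - w i⟫_ℝ + ⟪w j, w i - w j⟫_ℝ = -⟪w i - w j, w i - w j⟫_ℝ := by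
      simp only [inner_sub_left, inner_sub_right]
      rw [real_inner_comm (w j) (w i)]
      ring
    rw [this, real_inner_self_eq_norm_sq]
  have h2 : ∑ i, ∑ j, b i j * (-‖w i - w j‖^2) ≤ 0 := by
    apply Finset.sum_nonpos
    intro i _
    apply Finset.sum_nonpos
    intro j _
    have := hb i j
    nlinarith [sq_nonneg ‖w i - w j‖]
  linarith [key ▸ h2, h2]

/-- Grönwall-type exponential decay. -/
lemma csAux_gronwall (E E' : ℝ → ℝ) (c T : ℝ)
    (hE : ∀ t, T ≤ t → HasDerivAt E (E' t) t)
    (hbound : ∀ t, T ≤ t → E' t ≤ -c * E t) :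
    ∀ t, T ≤ t → E t ≤ E T * Real.exp (c * T) * Real.exp (-c * t) := by
  set g : ℝ → ℝ := fun t => E t * Real.exp (c * t) with hg_def
  have hg : ∀ t, T ≤ t → HasDerivAt g
      (E' t * Real.exp (c * t) + E t * (Real.exp (c * t) * c)) t := by
    intro t ht
    have he : HasDerivAt (fun t => Real.exp (c * t)) (Real.exp (c * t) * c) t := by
      simpa using (((hasDerivAt_id t).const_mul c).exp)
    exact (hE t ht).mul he
  have hanti : AntitoneOn g (Set.Ici T) := by
    apply antitoneOn_of_deriv_nonpos (convex_Ici T)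
    · intro t ht
      exact (hg t ht).continuousAt.continuousWithinAt
    · intro t ht
      rw [interior_Ici] at ht
      exact (hg t ht.le).differentiableAt.differentiableWithinAt
    · intro t ht
      rw [interior_Ici] at ht
      rw [(hg t ht.le).deriv]
      have hb := hbound t ht.le
      have hexp := Real.exp_pos (c * t)
      nlinarith
  intro t ht
  have h1 : g t ≤ g T := hanti (Set.self_mem_Ici) ht ht
  have h2 : E t * Real.exp (c * t) ≤ E T * Real.exp (c * T) := h1
  have h3 := mul_le_mul_of_nonneg_right h2 (Real.exp_pos (-c * t)).le
  calc E t = E t * Real.exp (c * t) * Real.exp (-c * t) := by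
        rw [mul_assoc, ← Real.exp_add]; ring_nf; simp
    _ ≤ E T * Real.exp (c * T) * Real.exp (-c * t) := h3

/-- If after some time `T ≥ 0` the deviations satisfy
`‖Δᵢ(t)‖ ≤ εᵢ(t) ‖vᵢ^⊥(t)‖` with `εᵢ` taking values in `[0,ℓ]` and
`ℓ < (min α)/(max β)`, then the perturbed Cucker-Smale system tends to consensus. -/
theorem perturbedCuckerSmale_consensus_of_bounded_deviation
    {d N : ℕ} (hN : 0 < N)
    (a : ℝ → ℝ)
    (ha_pos : ∀ r, 0 ≤ r → 0 < a r)
    (ha_mono : ∀ r s, 0 ≤ r → r ≤ s → a s ≤ a r)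
    (ha_bdd : ∃ C, ∀ r, 0 ≤ r → a r ≤ C)
    (ha_lip : ∃ K : NNReal, LipschitzWith K a)
    (α β : ℝ → ℝ)
    (hα : ∀ t, 0 ≤ t → 0 ≤ α t) (hβ : ∀ t, 0 ≤ t → 0 < β t)
    (ℓ αmin βmax : ℝ)
    (hαmin : ∀ t, 0 ≤ t → αmin ≤ α t)
    (hβmax : ∀ t, 0 ≤ t → β t ≤ βmax)
    (hℓ : ℓ < αmin / βmax)
    (ε : Fin N → ℝ → ℝ) (hε : ∀ (i : Fin N), ∀ t, 0 ≤ t → ε i t ∈ Set.Icc 0 ℓ)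
    (Δ : Fin N → ℝ → EuclideanSpace ℝ (Fin d))
    (x v : ℝ → Fin N → EuclideanSpace ℝ (Fin d))
    (hx : ∀ (i : Fin N), ∀ t, 0 ≤ t → HasDerivAt (fun s => x s i) (v t i) t)
    (hv : ∀ (i : Fin N), ∀ t, 0 ≤ t → HasDerivAt (fun s => v s i)
      ((N : ℝ)⁻¹ • ∑ j, a ‖x t i - x t j‖ • (v t j - v t i)
        + α t • (meanVec (v t) - v t i) + β t • Δ i t) t)
    (T : ℝ) (hT : 0 ≤ T)
    (hΔ : ∀ t, T ≤ t → ∀ i, ‖Δ i t‖ ≤ ε i t * ‖v t i - meanVec (v t)‖) :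
    ∀ i, Tendsto (fun t => ‖v t i - meanVec (v t)‖) atTop (nhds 0) := by
  classical
  have hβmax_pos : 0 < βmax := lt_of_lt_of_le (hβ 0 le_rfl) (hβmax 0 le_rfl)
  have i0 : Fin N := ⟨0, hN⟩
  have hℓ0 : 0 ≤ ℓ := le_trans (hε i0 0 le_rfl).1 (hε i0 0 le_rfl).2
  have hc' : ℓ * βmax < αmin := (lt_div_iff₀ hβmax_pos).mp hℓ
  set c : ℝ := 2 * (αmin - ℓ * βmax) with hc_def
  have hc_pos : 0 < c := by rw [hc_def]; linarith
  have hNne : (N:ℝ) ≠ 0 := Nat.cast_ne_zero.mpr hN.ne'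
  -- the right-hand side of the velocity equation
  set F : Fin N → ℝ → EuclideanSpace ℝ (Fin d) := fun i t =>
      (N : ℝ)⁻¹ • ∑ j, a ‖x t i - x t j‖ • (v t j - v t i)
        + α t • (meanVec (v t) - v t i) + β t • Δ i t with hF_def
  have hv' : ∀ (i : Fin N), ∀ t, 0 ≤ t → HasDerivAt (fun s => v s i) (F i t) t := by
    intro i t ht; simpa only [hF_def] using hv i t ht
  have hvbar : ∀ t, 0 ≤ t →
      HasDerivAt (fun s => meanVec (v s)) ((N:ℝ)⁻¹ • ∑ i, F i t) t := by
    intro t ht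
    have := (HasDerivAt.fun_sum (fun i (_ : i ∈ Finset.univ) => hv' i t ht)).fun_const_smul ((N:ℝ)⁻¹)
    simpa only [meanVec] using this
  set Fb : ℝ → EuclideanSpace ℝ (Fin d) := fun t => (N:ℝ)⁻¹ • ∑ j, F j t with hFb_def
  have hw : ∀ (i : Fin N), ∀ t, 0 ≤ t →
      HasDerivAt (fun s => v s i - meanVec (v s)) (F i t - Fb t) t := by
    intro i t ht
    exact (hv' i t ht).sub (hvbar t ht)
  set En : ℝ → ℝ := fun t => ∑ i, ‖v t i - meanVec (v t)‖^2 with hEn_def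
  set En' : ℝ → ℝ := fun t => ∑ i, 2 * ⟪v t i - meanVec (v t), F i t - Fb t⟫_ℝ with hEn'_def
  have hEn : ∀ t, 0 ≤ t → HasDerivAt En (En' t) t := by
    intro t ht
    have hsum : HasDerivAt (fun s => ∑ i, ⟪v s i - meanVec (v s), v s i - meanVec (v s)⟫_ℝ)
        (∑ i, (⟪v t i - meanVec (v t), F i t - Fb t⟫_ℝ
          + ⟪F i t - Fb t, v t i - meanVec (v t)⟫_ℝ)) t :=
      HasDerivAt.fun_sum (fun i _ => (hw i t ht).inner ℝ (hw i t ht))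
    have hfun : En = fun s => ∑ i, ⟪v s i - meanVec (v s), v s i - meanVec (v s)⟫_ℝ := by
      funext s
      simp only [hEn_def, real_inner_self_eq_norm_sq]
    rw [hfun]
    convert hsum using 1
    rw [hEn'_def]
    refine Finset.sum_congr rfl fun i _ => ?_
    rw [real_inner_comm (F i t - Fb t)]
    ring
  have hsum0 : ∀ t, ∑ i, (v t i - meanVec (v t)) = 0 := by
    intro t
    have h1 : ∑ _i : Fin N, meanVec (v t) = ∑ i, v t i := by
      rw [Finset.sum_const, Finset.card_univ, Fintype.card_fin,
        ← Nat.cast_smul_eq_nsmul ℝ, meanVec, smul_smul, mul_inv_cancel₀ hNne, one_smul]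
    rw [Finset.sum_sub_distrib, h1, sub_self]
  -- the key differential inequality
  have hkey : ∀ t, T ≤ t → En' t ≤ -c * En t := by
    intro t ht
    have ht0 : 0 ≤ t := le_trans hT ht
    have hzero : ∑ i, ⟪v t i - meanVec (v t), Fb t⟫_ℝ = 0 := by
      rw [← sum_inner, hsum0 t, inner_zero_left]
    have hsplit : En' t = 2 * ∑ i, ⟪v t i - meanVec (v t), F i t⟫_ℝ := by
      rw [hEn'_def]
      calc ∑ i, 2 * ⟪v t i - meanVec (v t), F i t - Fb t⟫_ℝ
          = ∑ i, (2 * ⟪v t i - meanVec (v t), F i t⟫_ℝ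
              - 2 * ⟪v t i - meanVec (v t), Fb t⟫_ℝ) := by
            refine Finset.sum_congr rfl fun i _ => ?_
            rw [inner_sub_right]; ring
        _ = 2 * ∑ i, ⟪v t i - meanVec (v t), F i t⟫_ℝ
              - 2 * ∑ i, ⟪v t i - meanVec (v t), Fb t⟫_ℝ := by
            rw [Finset.sum_sub_distrib, Finset.mul_sum, Finset.mul_sum]
        _ = 2 * ∑ i, ⟪v t i - meanVec (v t), F i t⟫_ℝ := by rw [hzero]; ring
    have hvw : ∀ (p q : Fin N), v t p - v t q
        = (v t p - meanVec (v t)) - (v t q - meanVec (v t)) :=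
      fun p q => (sub_sub_sub_cancel_right _ _ _).symm
    have hterm : ∀ i, ⟪v t i - meanVec (v t), F i t⟫_ℝ
        = (N:ℝ)⁻¹ * (∑ j, a ‖x t i - x t j‖
            * ⟪v t i - meanVec (v t), (v t j - meanVec (v t)) - (v t i - meanVec (v t))⟫_ℝ)
          - α t * ‖v t i - meanVec (v t)‖^2
          + β t * ⟪v t i - meanVec (v t), Δ i t⟫_ℝ := by
      intro i
      have hB : meanVec (v t) - v t i = -(v t i - meanVec (v t)) := (neg_sub _ _).symm
      rw [hF_def]
      simp only [inner_add_right, real_inner_smul_right, inner_sum, hB, inner_neg_right,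
        real_inner_self_eq_norm_sq, hvw]
      ring
    have hS : ∑ i, ∑ j, a ‖x t i - x t j‖
        * ⟪v t i - meanVec (v t), (v t j - meanVec (v t)) - (v t i - meanVec (v t))⟫_ℝ ≤ 0 := by
      have := csAux_sym_sum_nonpos (fun i j => a ‖x t i - x t j‖)
        (fun i j => by simp only [norm_sub_rev]) (fun i j => (ha_pos _ (norm_nonneg _)).le)
        (fun i => v t i - meanVec (v t))
      simpa using this
    have hper : ∀ i, -(α t) * ‖v t i - meanVec (v t)‖^2
        + β t * ⟪v t i - meanVec (v t), Δ i t⟫_ℝ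
        ≤ (-αmin + βmax * ℓ) * ‖v t i - meanVec (v t)‖^2 := by
      intro i
      have h1 : ⟪v t i - meanVec (v t), Δ i t⟫_ℝ ≤ ‖v t i - meanVec (v t)‖ * ‖Δ i t‖ :=
        real_inner_le_norm _ _
      have h2 := hΔ t ht i
      have h3 := (hε i t ht0).1
      have h4 := (hε i t ht0).2
      have h5 := hβ t ht0
      have h6 := hβmax t ht0
      have h7 := hαmin t ht0
      have h8 : (0:ℝ) ≤ ‖v t i - meanVec (v t)‖ := norm_nonneg _
      have hb1 : β t * ⟪v t i - meanVec (v t), Δ i t⟫_ℝ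
          ≤ β t * (ε i t * ‖v t i - meanVec (v t)‖^2) := by
        apply mul_le_mul_of_nonneg_left _ h5.le
        calc ⟪v t i - meanVec (v t), Δ i t⟫_ℝ
            ≤ ‖v t i - meanVec (v t)‖ * ‖Δ i t‖ := h1
          _ ≤ ‖v t i - meanVec (v t)‖ * (ε i t * ‖v t i - meanVec (v t)‖) :=
              mul_le_mul_of_nonneg_left h2 h8
          _ = ε i t * ‖v t i - meanVec (v t)‖^2 := by ring
      have hb2 : β t * (ε i t * ‖v t i - meanVec (v t)‖^2)
          ≤ βmax * (ℓ * ‖v t i - meanVec (v t)‖^2) := by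
        apply mul_le_mul h6 (mul_le_mul_of_nonneg_right h4 (sq_nonneg _))
          (mul_nonneg h3 (sq_nonneg _)) (le_trans h5.le h6)
      have hb3 : -(α t) * ‖v t i - meanVec (v t)‖^2 ≤ -αmin * ‖v t i - meanVec (v t)‖^2 := by
        nlinarith [sq_nonneg ‖v t i - meanVec (v t)‖]
      nlinarith
    have hsum_le : ∑ i, ⟪v t i - meanVec (v t), F i t⟫_ℝ ≤ (-αmin + βmax * ℓ) * En t := by
      have heq : ∑ i, ⟪v t i - meanVec (v t), F i t⟫_ℝ
          = (N:ℝ)⁻¹ * (∑ i, ∑ j, a ‖x t i - x t j‖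
              * ⟪v t i - meanVec (v t), (v t j - meanVec (v t)) - (v t i - meanVec (v t))⟫_ℝ)
            + ∑ i, (-(α t) * ‖v t i - meanVec (v t)‖^2
              + β t * ⟪v t i - meanVec (v t), Δ i t⟫_ℝ) := by
        rw [Finset.mul_sum, ← Finset.sum_add_distrib]
        refine Finset.sum_congr rfl fun i _ => ?_
        rw [hterm i]; ring
      rw [heq]
      have hS' : (N:ℝ)⁻¹ * (∑ i, ∑ j, a ‖x t i - x t j‖
          * ⟪v t i - meanVec (v t), (v t j - meanVec (v t)) - (v t i - meanVec (v t))⟫_ℝ) ≤ 0 := by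
        have := mul_le_mul_of_nonneg_left hS (by positivity : (0:ℝ) ≤ (N:ℝ)⁻¹)
        simpa using this
      have hsum' : ∑ i, (-(α t) * ‖v t i - meanVec (v t)‖^2
          + β t * ⟪v t i - meanVec (v t), Δ i t⟫_ℝ)
          ≤ ∑ i, (-αmin + βmax * ℓ) * ‖v t i - meanVec (v t)‖^2 :=
        Finset.sum_le_sum fun i _ => hper i
      have : ∑ i, (-αmin + βmax * ℓ) * ‖v t i - meanVec (v t)‖^2
          = (-αmin + βmax * ℓ) * En t := by
        rw [hEn_def, Finset.mul_sum]
      linarith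
    rw [hsplit, hc_def]
    nlinarith [hsum_le]
  -- Grönwall decay and squeeze
  have hdecay := csAux_gronwall En En' c T (fun t ht => hEn t (le_trans hT ht)) hkey
  have hEnonneg : ∀ t, 0 ≤ En t := fun t => Finset.sum_nonneg fun i _ => sq_nonneg _
  have htendK : Tendsto (fun t => En T * Real.exp (c * T) * Real.exp (-c * t)) atTop (nhds 0) := by
    have h1 : Tendsto (fun t : ℝ => c * t) atTop atTop :=
      tendsto_id.const_mul_atTop hc_pos
    have h2 : Tendsto (fun t : ℝ => -(c * t)) atTop atBot := tendsto_neg_atTop_atBot.comp h1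
    have h3 : Tendsto (fun t : ℝ => Real.exp (-(c * t))) atTop (nhds 0) :=
      Real.tendsto_exp_atBot.comp h2
    have h4 := h3.const_mul (En T * Real.exp (c * T))
    simpa [neg_mul] using h4
  have hEn0 : Tendsto En atTop (nhds 0) := by
    apply squeeze_zero' (Eventually.of_forall hEnonneg) _ htendK
    filter_upwards [eventually_ge_atTop T] with t ht
    exact hdecay t ht
  intro i
  have hle : ∀ t, ‖v t i - meanVec (v t)‖^2 ≤ En t := by
    intro t
    rw [hEn_def]
    exact Finset.single_le_sum (f := fun j => ‖v t j - meanVec (v t)‖^2)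
      (fun j _ => sq_nonneg _) (Finset.mem_univ i)
  have h2 : Tendsto (fun t => ‖v t i - meanVec (v t)‖^2) atTop (nhds 0) :=
    squeeze_zero (fun t => sq_nonneg _) hle hEn0
  have h4 : (fun t => Real.sqrt (‖v t i - meanVec (v t)‖^2))
      = fun t => ‖v t i - meanVec (v t)‖ :=
    funext fun t => Real.sqrt_sq (norm_nonneg _)
  rw [← h4]
  simpa [Real.sqrt_zero, Function.comp_def] using (Real.continuous_sqrt.tendsto 0).comp h2
end
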